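/- Let I be a lower ideal in Φ⁺. Then the map w ↦ N(w) ∩ I is a bijection from {w ∈ W : w⁻¹(Δ) ⊆ (−I) ∪ Φ⁺} onto the set W^I of Weyl type subsets of I. -/

import Mathlib

open scoped Classical

noncomputable section

variable (V : Type) [AddCommGroup V] [Module ℚ V]

/-- A finite reduced crystallographic root system `Φ` spanning the `ℚ`-vector space `V`,
together with a fixed system of positive roots `Pos`, the corresponding set of simple
roots `Δ`, the coroots `coroot α` (so that the reflection associated to `α` is
`x ↦ x - coroot α x • α`), and `coeff α δ`, the (unique, by linear independence of `Δ`)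
nonnegative integral coefficient of the simple root `δ` in the expression of the
positive root `α` as a combination of simple roots. -/
structure RootSystemData where
  Φ : Finset V
  Pos : Finset V
  Δ : Finset V
  coeff : V → V → ℕ
  coroot : V → V →ₗ[ℚ] ℚ
  span_eq_top : Submodule.span ℚ (Φ : Set V) = ⊤
  root_ne_zero : ∀ α ∈ Φ, α ≠ (0 : V)
  reduced : ∀ α ∈ Φ, ∀ c : ℚ, c • α ∈ Φ → c = 1 ∨ c = -1
  coroot_self : ∀ α ∈ Φ, coroot α α = 2
  reflect_mem : ∀ α ∈ Φ, ∀ β ∈ Φ, β - coroot α β • α ∈ Φ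
  crystallographic : ∀ α ∈ Φ, ∀ β ∈ Φ, ∃ n : ℤ, coroot α β = (n : ℚ)
  pos_subset : Pos ⊆ Φ
  pos_or_neg : ∀ α ∈ Φ, α ∈ Pos ∨ -α ∈ Pos
  pos_not_neg : ∀ α ∈ Pos, -α ∉ Pos
  simple_subset : Δ ⊆ Pos
  simple_indep : LinearIndependent ℚ (fun δ : (Δ : Set V) => (δ : V))
  pos_combo : ∀ α ∈ Pos, α = ∑ δ ∈ Δ, (coeff α δ : ℚ) • δ

variable {V}

/-- `I` is a lower ideal in the set `Pos` of positive roots. -/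
def IsLowerIdealOf (Pos I : Finset V) : Prop :=
  I ⊆ Pos ∧ ∀ α ∈ I, ∀ β ∈ Pos, α - β ∈ Pos → α - β ∈ I

/-- `Φ⁺_Θ`: the positive roots that are `ℤ`-linear combinations of roots in `Θ`. -/
def posThetaOf (Pos Θ : Finset V) : Finset V :=
  Pos.filter fun α => ∃ c : V → ℤ, α = ∑ δ ∈ Θ, (c δ : ℚ) • δ

/-- `I` is an upper ideal with respect to `Θ`. -/
def IsUpperIdealWrt (Pos Θ I : Finset V) : Prop :=
  ∀ α ∈ I, ∀ β ∈ posThetaOf Pos Θ, α + β ∈ Pos → α + β ∈ I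

/-- `I` is a `Θ`-ideal. -/
def IsThetaIdealOf (Pos Θ I : Finset V) : Prop :=
  IsLowerIdealOf Pos I ∧ IsUpperIdealWrt Pos Θ I ∧ posThetaOf Pos Θ ⊆ I

/-- The partial order `α ≼_Θ β`: `β - α` is a (possibly empty) sum of
positive roots belonging to `Φ⁺_Θ`. -/
def leTheta (Pos Θ : Finset V) (α β : V) : Prop :=
  ∃ m : Multiset V, (∀ γ ∈ m, γ ∈ posThetaOf Pos Θ) ∧ β - α = m.sum

/-- `Y` is a Weyl type subset of the lower ideal `I`. -/
def IsWeylType (I Y : Finset V) : Prop :=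
  Y ⊆ I ∧ (∀ α ∈ Y, ∀ β ∈ Y, α + β ∈ I → α + β ∈ Y) ∧
    ∀ γ ∈ I, ∀ δ ∈ I, γ ∉ Y → δ ∉ Y → γ + δ ∈ I → γ + δ ∉ Y

/-- `g` is the reflection `s_α` associated to the root `α`. -/
def IsReflectionOf (D : RootSystemData V) (α : V) (g : V ≃ₗ[ℚ] V) : Prop :=
  ∀ x, g x = x - D.coroot α x • α

/-- The Weyl group `W`, generated by the reflections `s_α` for `α ∈ Φ`. -/
def WeylGroup (D : RootSystemData V) : Subgroup (V ≃ₗ[ℚ] V) :=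
  Subgroup.closure {g | ∃ α ∈ D.Φ, IsReflectionOf D α g}

/-- The parabolic subgroup `W_Θ` generated by the reflections `s_α` for `α ∈ Θ`. -/
def WThetaGroup (D : RootSystemData V) (Θ : Finset V) : Subgroup (V ≃ₗ[ℚ] V) :=
  Subgroup.closure {g | ∃ α ∈ Θ, IsReflectionOf D α g}

/-- The length `ℓ(w)`: the smallest number of simple reflections needed to write `w`. -/
noncomputable def len (D : RootSystemData V) (w : V ≃ₗ[ℚ] V) : ℕ :=
  sInf {p : ℕ | ∃ l : List (V ≃ₗ[ℚ] V), l.length = p ∧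
    (∀ g ∈ l, ∃ α ∈ D.Δ, IsReflectionOf D α g) ∧ l.prod = w}

/-- `N(w) = {α ∈ Φ⁺ : w(α) ∈ Φ⁻}` (where `Φ⁻ = -Φ⁺`). -/
def negSet (D : RootSystemData V) (w : V ≃ₗ[ℚ] V) : Finset V :=
  D.Pos.filter fun α => -(w α) ∈ D.Pos

/-- `W^Θ`, the set of minimal length left coset representatives:
`{w ∈ W : ℓ(w) < ℓ(w s_α) for all α ∈ Θ}`. -/
def minCosetReps (D : RootSystemData V) (Θ : Finset V) : Set (V ≃ₗ[ℚ] V) :=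
  {w | w ∈ WeylGroup D ∧ ∀ g : V ≃ₗ[ℚ] V,
    (∃ α ∈ Θ, IsReflectionOf D α g) → len D w < len D (w * g)}

/-- The height `ht(α)` of a positive root: the sum of its coefficients over the simple roots. -/
def rootHt (D : RootSystemData V) (α : V) : ℕ := ∑ δ ∈ D.Δ, D.coeff α δ


namespace RSAux

variable {V : Type} [AddCommGroup V] [Module ℚ V] (D : RootSystemData V)

lemma zero_not_pos : (0 : V) ∉ D.Pos := by
  intro h
  have := D.pos_not_neg 0 h
  rw [neg_zero] at this
  exact this h

lemma zero_not_phi : (0 : V) ∉ D.Φ := fun h => D.root_ne_zero 0 h rfl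

lemma neg_mem_phi {α : V} (h : α ∈ D.Φ) : -α ∈ D.Φ := by
  have := D.reflect_mem α h α h
  rwa [D.coroot_self α h, two_smul, sub_add_eq_sub_sub, sub_self, zero_sub] at this

lemma neg_pos_not_pos {α : V} (h : -α ∈ D.Pos) : α ∉ D.Pos := by
  intro h'
  exact D.pos_not_neg α h' h

lemma mem_phi_of_neg_pos {α : V} (h : -α ∈ D.Pos) : α ∈ D.Φ := by
  have := neg_mem_phi D (D.pos_subset h)
  rwa [neg_neg] at this

lemma pos_of_phi_not_neg {α : V} (h : α ∈ D.Φ) (h' : -α ∉ D.Pos) : α ∈ D.Pos :=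
  (D.pos_or_neg α h).resolve_right h'

/-- Uniqueness of coefficients over the simple roots. -/
lemma coeff_unique {c d : V → ℚ}
    (h : ∑ δ ∈ D.Δ, c δ • δ = ∑ δ ∈ D.Δ, d δ • δ) : ∀ δ ∈ D.Δ, c δ = d δ := by
  intro δ hδ
  have hli := linearIndependent_iff'.mp D.simple_indep
  -- index type is ↥(D.Δ : Set V)
  have hsum : ∑ x ∈ D.Δ.attach, (c x.1 - d x.1) • (x.1 : V) = 0 := by
    rw [Finset.sum_congr rfl (fun x _ => sub_smul (c x.1) (d x.1) x.1)]
    rw [Finset.sum_sub_distrib]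
    rw [Finset.sum_attach D.Δ (fun y => c y • y), Finset.sum_attach D.Δ (fun y => d y • y), h,
      sub_self]
  -- transfer to a Finset of the subtype ↥(D.Δ : Set V)
  let e : {x // x ∈ D.Δ} ↪ ↥(D.Δ : Set V) :=
    ⟨fun x => ⟨x.1, by simpa using x.2⟩, by intro a b hab; cases a; cases b; simpa using hab⟩
  have hsum2 : ∑ x ∈ D.Δ.attach.map e, ((fun y : ↥(D.Δ : Set V) => c y.1 - d y.1) x) •
      ((fun y : ↥(D.Δ : Set V) => (y : V)) x) = 0 := by
    rw [Finset.sum_map]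
    exact hsum
  have h0 := hli (D.Δ.attach.map e) (fun y => c y.1 - d y.1) hsum2 ⟨δ, by simpa using hδ⟩
    (by simp [e])
  simp only [sub_eq_zero] at h0
  exact h0

/-- A nonnegative combination of simple roots that is a root is a positive root. -/
lemma combo_pos {c : V → ℚ} (hc : ∀ δ ∈ D.Δ, 0 ≤ c δ)
    (hv : (∑ δ ∈ D.Δ, c δ • δ) ∈ D.Φ) : (∑ δ ∈ D.Δ, c δ • δ) ∈ D.Pos := by
  set v := ∑ δ ∈ D.Δ, c δ • δ with hvdef
  rcases D.pos_or_neg v hv with hp | hn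
  · exact hp
  · exfalso
    have hrepr := D.pos_combo (-v) hn
    have hzero : ∑ δ ∈ D.Δ, (c δ + (D.coeff (-v) δ : ℚ)) • δ = ∑ δ ∈ D.Δ, (0:ℚ) • δ := by
      rw [Finset.sum_congr rfl (fun δ _ => add_smul (c δ) _ δ), Finset.sum_add_distrib]
      rw [← hvdef, ← hrepr]
      simp
    have hco := coeff_unique D hzero
    have hvz : -v = 0 := by
      rw [hrepr]
      apply Finset.sum_eq_zero
      intro δ hδ
      have h1 := hco δ hδ
      have h2 := hc δ hδ
      have h3 : (0:ℚ) ≤ (D.coeff (-v) δ : ℚ) := Nat.cast_nonneg _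
      have : (D.coeff (-v) δ : ℚ) = 0 := by linarith
      rw [this, zero_smul]
    rw [hvz] at hn
    exact zero_not_pos D hn

end RSAux
namespace RSAux

variable {V : Type} [AddCommGroup V] [Module ℚ V] (D : RootSystemData V)

/-- Sum of two positive roots that is a root is positive. -/
lemma add_pos_mem {α β : V} (hα : α ∈ D.Pos) (hβ : β ∈ D.Pos) (h : α + β ∈ D.Φ) :
    α + β ∈ D.Pos := by
  have hrep : α + β = ∑ δ ∈ D.Δ, ((D.coeff α δ : ℚ) + (D.coeff β δ : ℚ)) • δ := by
    rw [Finset.sum_congr rfl (fun δ _ => add_smul _ _ δ), Finset.sum_add_distrib,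
      ← D.pos_combo α hα, ← D.pos_combo β hβ]
  rw [hrep] at h ⊢
  exact combo_pos D (fun δ _ => by positivity) h

/-- The representation of a multiset sum of positive roots. -/
lemma msum_repr (m : Multiset V) (hm : ∀ γ ∈ m, γ ∈ D.Pos) :
    m.sum = ∑ δ ∈ D.Δ, ((m.map (fun γ => (D.coeff γ δ : ℚ))).sum) • δ := by
  induction m using Multiset.induction with
  | empty => simp
  | cons a s ih =>
    have ha : a ∈ D.Pos := hm a (Multiset.mem_cons_self a s)
    have ihs := ih (fun γ hγ => hm γ (Multiset.mem_cons_of_mem hγ))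
    rw [Multiset.sum_cons]
    have hsplit : ∀ δ ∈ D.Δ, ((Multiset.map (fun γ => (D.coeff γ δ : ℚ)) (a ::ₘ s)).sum) • δ
        = (D.coeff a δ : ℚ) • δ + ((Multiset.map (fun γ => (D.coeff γ δ : ℚ)) s).sum) • δ := by
      intro δ _
      rw [Multiset.map_cons, Multiset.sum_cons, add_smul]
    rw [Finset.sum_congr rfl hsplit, Finset.sum_add_distrib, ← ihs, ← D.pos_combo a ha]

/-- A sum of a multiset of positive roots that is a root is a positive root. -/
lemma msum_pos {m : Multiset V} (hm : ∀ γ ∈ m, γ ∈ D.Pos) (h : m.sum ∈ D.Φ) :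
    m.sum ∈ D.Pos := by
  rw [msum_repr D m hm] at h ⊢
  apply combo_pos D _ h
  intro δ _
  apply Multiset.sum_nonneg
  intro x hx
  rcases Multiset.mem_map.mp hx with ⟨γ, _, rfl⟩
  positivity

/-- A nonempty multiset of positive roots has nonzero sum. -/
lemma msum_ne_zero {m : Multiset V} (hm : ∀ γ ∈ m, γ ∈ D.Pos) (hne : m ≠ 0) :
    m.sum ≠ 0 := by
  intro h0
  rcases Multiset.exists_mem_of_ne_zero hne with ⟨a, ha⟩
  have haP := hm a ha
  -- coefficients of the sum are zero
  have h1 : ∑ δ ∈ D.Δ, ((m.map (fun γ => (D.coeff γ δ : ℚ))).sum) • δ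
      = ∑ δ ∈ D.Δ, (0:ℚ) • δ := by
    rw [← msum_repr D m hm, h0]; simp
  have h2 := coeff_unique D h1
  -- so the coefficients of a vanish
  have h3 : a = 0 := by
    rw [D.pos_combo a haP]
    apply Finset.sum_eq_zero
    intro δ hδ
    have h4 := h2 δ hδ
    have h5 : (0:ℚ) ≤ ((m.erase a).map (fun γ => (D.coeff γ δ : ℚ))).sum := by
      apply Multiset.sum_nonneg
      intro x hx
      rcases Multiset.mem_map.mp hx with ⟨γ, _, rfl⟩
      positivity
    have h6 : (m.map (fun γ => (D.coeff γ δ : ℚ))).sum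
        = (D.coeff a δ : ℚ) + ((m.erase a).map (fun γ => (D.coeff γ δ : ℚ))).sum := by
      conv_lhs => rw [← Multiset.cons_erase ha]
      rw [Multiset.map_cons, Multiset.sum_cons]
    rw [h6] at h4
    have h7 : (0:ℚ) ≤ (D.coeff a δ : ℚ) := Nat.cast_nonneg _
    have : (D.coeff a δ : ℚ) = 0 := by linarith
    rw [this, zero_smul]
  exact D.root_ne_zero a (D.pos_subset haP) h3

/-- coefficients are additive when `α, β, α + β` are positive. -/
lemma coeff_add {α β : V} (hα : α ∈ D.Pos) (hβ : β ∈ D.Pos) (h : α + β ∈ D.Pos) :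
    ∀ δ ∈ D.Δ, D.coeff (α + β) δ = D.coeff α δ + D.coeff β δ := by
  intro δ hδ
  have h1 : ∑ d ∈ D.Δ, (D.coeff (α+β) d : ℚ) • d
      = ∑ d ∈ D.Δ, ((D.coeff α d : ℚ) + (D.coeff β d : ℚ)) • d := by
    rw [Finset.sum_congr rfl (fun d _ => add_smul _ _ d), Finset.sum_add_distrib,
      ← D.pos_combo α hα, ← D.pos_combo β hβ, ← D.pos_combo (α+β) h]
  have h2 := coeff_unique D h1 δ hδ
  exact_mod_cast h2

lemma rootHt_add {α β : V} (hα : α ∈ D.Pos) (hβ : β ∈ D.Pos) (h : α + β ∈ D.Pos) :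
    rootHt D (α + β) = rootHt D α + rootHt D β := by
  unfold rootHt
  rw [← Finset.sum_add_distrib]
  exact Finset.sum_congr rfl (coeff_add D hα hβ h)

lemma rootHt_pos {α : V} (hα : α ∈ D.Pos) : 0 < rootHt D α := by
  rcases Nat.eq_zero_or_pos (rootHt D α) with h | h
  · exfalso
    unfold rootHt at h
    have hz : ∀ δ ∈ D.Δ, D.coeff α δ = 0 := by
      intro δ hδ
      exact Finset.sum_eq_zero_iff.mp h δ hδ
    have : α = 0 := by
      rw [D.pos_combo α hα]
      apply Finset.sum_eq_zero
      intro δ hδ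
      rw [hz δ hδ]; simp
    exact D.root_ne_zero α (D.pos_subset hα) this
  · exact h

/-- A simple root has coefficient 1 at itself and 0 elsewhere. -/
lemma coeff_simple {δ : V} (hδ : δ ∈ D.Δ) :
    ∀ x ∈ D.Δ, (D.coeff δ x : ℚ) = if x = δ then 1 else 0 := by
  have h1 : ∑ x ∈ D.Δ, (D.coeff δ x : ℚ) • x
      = ∑ x ∈ D.Δ, (if x = δ then (1:ℚ) else 0) • x := by
    rw [← D.pos_combo δ (D.simple_subset hδ)]
    simp only [ite_smul, one_smul, zero_smul]
    rw [Finset.sum_ite_eq' D.Δ δ (fun x => x)]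
    simp [hδ]
  exact coeff_unique D h1

lemma rootHt_simple {δ : V} (hδ : δ ∈ D.Δ) : rootHt D δ = 1 := by
  have h := coeff_simple D hδ
  have hN : ∀ x ∈ D.Δ, D.coeff δ x = if x = δ then 1 else 0 := by
    intro x hx
    have hx2 := h x hx
    split_ifs at hx2 ⊢ with he
    · exact_mod_cast hx2
    · exact_mod_cast hx2
  unfold rootHt
  rw [Finset.sum_congr rfl hN, Finset.sum_ite_eq' D.Δ δ (fun _ => 1)]
  simp [hδ]

end RSAux
namespace RSAux

variable {V : Type} [AddCommGroup V] [Module ℚ V] (D : RootSystemData V)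

/-- The reflection as a linear map. -/
def srefL (α : V) : V →ₗ[ℚ] V := LinearMap.id - (D.coroot α).smulRight α

lemma srefL_apply (α x : V) : srefL D α x = x - D.coroot α x • α := rfl

lemma srefL_invol {α : V} (hα : α ∈ D.Φ) (x : V) : srefL D α (srefL D α x) = x := by
  simp only [srefL_apply, map_sub, map_smul, D.coroot_self α hα, smul_eq_mul]
  module

/-- The reflection `s_α` as a linear equivalence. -/
def sref (α : V) (hα : α ∈ D.Φ) : V ≃ₗ[ℚ] V :=
  LinearEquiv.ofLinear (srefL D α) (srefL D α)
    (LinearMap.ext (srefL_invol D hα)) (LinearMap.ext (srefL_invol D hα))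

lemma sref_apply {α : V} (hα : α ∈ D.Φ) (x : V) : sref D α hα x = x - D.coroot α x • α := rfl

lemma sref_symm_apply {α : V} (hα : α ∈ D.Φ) (x : V) :
    (sref D α hα).symm x = x - D.coroot α x • α := rfl

lemma sref_sref {α : V} (hα : α ∈ D.Φ) (x : V) : sref D α hα (sref D α hα x) = x :=
  srefL_invol D hα x

lemma sref_root {α : V} (hα : α ∈ D.Φ) : sref D α hα α = -α := by
  rw [sref_apply, D.coroot_self α hα, two_smul]
  abel

lemma sref_mem_phi {α : V} (hα : α ∈ D.Φ) {β : V} (hβ : β ∈ D.Φ) : sref D α hα β ∈ D.Φ :=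
  D.reflect_mem α hα β hβ

lemma isReflectionOf_sref {α : V} (hα : α ∈ D.Φ) : IsReflectionOf D α (sref D α hα) :=
  fun _ => rfl

lemma sref_mem_weyl {α : V} (hα : α ∈ D.Φ) : sref D α hα ∈ WeylGroup D :=
  Subgroup.subset_closure ⟨α, hα, isReflectionOf_sref D hα⟩

/-- A "unipotent" transvection preserving `Φ` is trivial. -/
lemma transvection_trivial {γ : V} (hγ : γ ∈ D.Φ) (h : V →ₗ[ℚ] ℚ) (hhγ : h γ = 0)
    (hmaps : ∀ β ∈ D.Φ, β - h β • γ ∈ D.Φ) : ∀ x : V, h x = 0 := by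
  have hΦ : ∀ β ∈ D.Φ, h β = 0 := by
    intro β hβ
    by_contra hne
    -- the sequence β - n • (h β • γ) consists of distinct elements of Φ
    set f : ℕ → V := fun n => β - (n : ℚ) • (h β • γ) with hf
    have hfm : ∀ n, f n ∈ D.Φ := by
      intro n
      induction n with
      | zero => simpa [hf] using hβ
      | succ k ih =>
        have hval : h (f k) = h β := by
          simp [hf, map_sub, map_smul, hhγ, smul_eq_mul]
        have := hmaps (f k) ih
        rw [hval] at this
        have heq : f k - h β • γ = f (k+1) := by
          simp only [hf]
          push_cast
          rw [add_smul, one_smul]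
          abel
        rwa [heq] at this
    have hinj : Function.Injective f := by
      intro a b hab
      simp only [hf, sub_right_inj] at hab
      have hγ0 : h β • γ ≠ 0 := by
        intro hz
        rcases smul_eq_zero.mp hz with h1 | h2
        · exact hne h1
        · exact D.root_ne_zero γ hγ h2
      have := smul_left_injective ℚ hγ0 hab
      exact_mod_cast this
    exact Set.infinite_range_of_injective hinj (Set.Finite.subset D.Φ.finite_toSet
      (Set.range_subset_iff.mpr hfm))
  -- extend to all of V by spanning
  intro x
  have hx : x ∈ Submodule.span ℚ (D.Φ : Set V) := by rw [D.span_eq_top]; trivial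
  induction hx using Submodule.span_induction with
  | mem y hy => exact hΦ y hy
  | zero => simp
  | add y z _ _ hy hz => rw [map_add, hy, hz, add_zero]
  | smul c y _ hy => rw [map_smul, hy, smul_zero]

/-- Reflections conjugate: `coroot (u γ) = coroot γ ∘ u⁻¹` for `Φ`-preserving `u`. -/
lemma coroot_conj {u : V ≃ₗ[ℚ] V} (hu : ∀ β ∈ D.Φ, u β ∈ D.Φ)
    (hu' : ∀ β ∈ D.Φ, u.symm β ∈ D.Φ) {γ : V} (hγ : γ ∈ D.Φ) (x : V) :
    D.coroot (u γ) x = D.coroot γ (u.symm x) := by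
  have huγ : u γ ∈ D.Φ := hu γ hγ
  set h : V →ₗ[ℚ] ℚ := D.coroot (u γ) - (D.coroot γ).comp (u.symm : V →ₗ[ℚ] V) with hh
  have hhγ : h (u γ) = 0 := by
    simp only [hh, LinearMap.sub_apply, LinearMap.comp_apply, LinearEquiv.coe_coe,
      LinearEquiv.symm_apply_apply, D.coroot_self (u γ) huγ, D.coroot_self γ hγ, sub_self]
  have hmaps : ∀ β ∈ D.Φ, β - h β • (u γ) ∈ D.Φ := by
    intro β hβ
    have hcomp : β - h β • (u γ)
        = sref D (u γ) huγ (u (sref D γ hγ (u.symm β))) := by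
      rw [sref_apply, sref_apply]
      rw [map_sub, map_sub, map_smul]
      simp only [LinearEquiv.apply_symm_apply]
      rw [map_smul, D.coroot_self (u γ) huγ, smul_eq_mul]
      simp only [hh, LinearMap.sub_apply, LinearMap.comp_apply, LinearEquiv.coe_coe]
      module
    rw [hcomp]
    exact sref_mem_phi D huγ (hu _ (sref_mem_phi D hγ (hu' β hβ)))
  have := transvection_trivial D huγ h hhγ hmaps x
  simp only [hh, LinearMap.sub_apply, LinearMap.comp_apply, LinearEquiv.coe_coe] at this
  linarith

lemma sref_conj {u : V ≃ₗ[ℚ] V} (hu : ∀ β ∈ D.Φ, u β ∈ D.Φ)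
    (hu' : ∀ β ∈ D.Φ, u.symm β ∈ D.Φ) {γ : V} (hγ : γ ∈ D.Φ) (x : V) :
    sref D (u γ) (hu γ hγ) x = u (sref D γ hγ (u.symm x)) := by
  rw [sref_apply, sref_apply, map_sub, map_smul]
  simp only [LinearEquiv.apply_symm_apply]
  rw [coroot_conj D hu hu' hγ]

end RSAux
namespace RSAux

variable {V : Type} [AddCommGroup V] [Module ℚ V] (D : RootSystemData V)

/-- Elements of the Weyl group preserve `Φ` (in both directions). -/
lemma weyl_maps_phi {w : V ≃ₗ[ℚ] V} (hw : w ∈ WeylGroup D) :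
    (∀ α ∈ D.Φ, w α ∈ D.Φ) ∧ (∀ α ∈ D.Φ, w.symm α ∈ D.Φ) := by
  induction hw using Subgroup.closure_induction with
  | mem g hg =>
    rcases hg with ⟨α, hα, hrefl⟩
    have hfor : ∀ β ∈ D.Φ, g β ∈ D.Φ := by
      intro β hβ
      rw [hrefl β]
      exact D.reflect_mem α hα β hβ
    constructor
    · exact hfor
    · intro β hβ
      have hinv : g (g β) = β := by
        rw [hrefl β, hrefl (β - D.coroot α β • α)]
        simp only [map_sub, map_smul, D.coroot_self α hα, smul_eq_mul]
        module
      have : g.symm β = g β := by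
        conv_lhs => rw [← hinv]
        rw [LinearEquiv.symm_apply_apply]
      rw [this]
      exact hfor β hβ
  | one => exact ⟨fun α hα => by simpa using hα, fun α hα => by exact hα⟩
  | mul x y _ _ hx hy =>
    refine ⟨fun α hα => ?_, fun α hα => ?_⟩
    · exact hx.1 _ (hy.1 α hα)
    · exact hy.2 _ (hx.2 α hα)
  | inv x _ hx => exact ⟨hx.2, fun α hα => by exact hx.1 α hα⟩

lemma weyl_phi {w : V ≃ₗ[ℚ] V} (hw : w ∈ WeylGroup D) {α : V} (hα : α ∈ D.Φ) :
    w α ∈ D.Φ := (weyl_maps_phi D hw).1 α hα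

lemma weyl_phi_symm {w : V ≃ₗ[ℚ] V} (hw : w ∈ WeylGroup D) {α : V} (hα : α ∈ D.Φ) :
    w.symm α ∈ D.Φ := (weyl_maps_phi D hw).2 α hα

lemma mem_negSet {w : V ≃ₗ[ℚ] V} {α : V} :
    α ∈ negSet D w ↔ α ∈ D.Pos ∧ -(w α) ∈ D.Pos := Finset.mem_filter

/-- If `w ∈ W` and `α ∈ Φ⁺ \ N(w)`, then `w α ∈ Φ⁺`. -/
lemma w_pos_of_not_negSet {w : V ≃ₗ[ℚ] V} (hw : w ∈ WeylGroup D) {α : V}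
    (hα : α ∈ D.Pos) (h : α ∉ negSet D w) : w α ∈ D.Pos := by
  have hφ : w α ∈ D.Φ := weyl_phi D hw (D.pos_subset hα)
  apply pos_of_phi_not_neg D hφ
  intro hneg
  exact h ((mem_negSet D).mpr ⟨hα, hneg⟩)

lemma mem_negSet_of {w : V ≃ₗ[ℚ] V} {α : V} (hα : α ∈ D.Pos) (h : -(w α) ∈ D.Pos) :
    α ∈ negSet D w := (mem_negSet D).mpr ⟨hα, h⟩

end RSAux
namespace RSAux

variable {V : Type} [AddCommGroup V] [Module ℚ V] (D : RootSystemData V)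

lemma weyl_ext {w₁ w₂ : V ≃ₗ[ℚ] V} (h : ∀ α ∈ D.Φ, w₁ α = w₂ α) : w₁ = w₂ := by
  ext x
  have hx : x ∈ Submodule.span ℚ (D.Φ : Set V) := by rw [D.span_eq_top]; trivial
  induction hx using Submodule.span_induction with
  | mem y hy => exact h y hy
  | zero => simp
  | add y z _ _ hy hz => simp only [map_add, hy, hz]
  | smul c y _ hy => simp only [map_smul, hy]

lemma weyl_finite : Finite (WeylGroup D) := by
  classical
  let F : WeylGroup D → ({x // x ∈ D.Φ} → {x // x ∈ D.Φ}) :=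
    fun w => fun x => ⟨w.1 x.1, weyl_phi D w.2 x.2⟩
  have hinj : Function.Injective F := by
    intro w₁ w₂ hF
    apply Subtype.ext
    apply weyl_ext D
    intro α hα
    have := congrFun hF ⟨α, hα⟩
    exact Subtype.ext_iff.mp this
  exact Finite.of_injective F hinj

/-- The simple roots span `V`. -/
lemma simple_span : ⊤ ≤ Submodule.span ℚ (Set.range (fun δ : ↥(D.Δ : Set V) => (δ : V))) := by
  rw [Subtype.range_coe]
  rw [← D.span_eq_top]
  apply Submodule.span_le.mpr
  intro α hα
  rcases D.pos_or_neg α hα with hp | hn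
  · rw [D.pos_combo α hp]
    apply Submodule.sum_mem
    intro δ hδ
    exact Submodule.smul_mem _ _ (Submodule.subset_span (by exact hδ))
  · have : α = -(-α) := by simp
    rw [this, D.pos_combo (-α) hn]
    apply Submodule.neg_mem
    apply Submodule.sum_mem
    intro δ hδ
    exact Submodule.smul_mem _ _ (Submodule.subset_span (by exact hδ))

/-- The simple roots as a basis of `V`. -/
noncomputable def simpleBasis : Module.Basis ↥(D.Δ : Set V) ℚ V :=
  Module.Basis.mk D.simple_indep (simple_span D)

noncomputable instance : Fintype ↥(D.Δ : Set V) := D.Δ.finite_toSet.fintype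

/-- A positive definite form on `V`. -/
noncomputable def bform₀ (x y : V) : ℚ :=
  ∑ i, (simpleBasis D).repr x i * (simpleBasis D).repr y i

lemma bform₀_nonneg (x : V) : 0 ≤ bform₀ D x x :=
  Finset.sum_nonneg fun i _ => mul_self_nonneg _

lemma bform₀_pos {x : V} (hx : x ≠ 0) : 0 < bform₀ D x x := by
  have hne : ∃ i, (simpleBasis D).repr x i ≠ 0 := by
    by_contra hz
    push_neg at hz
    apply hx
    have : (simpleBasis D).repr x = 0 := Finsupp.ext hz
    have h2 := congrArg ((simpleBasis D).repr.symm) this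
    simpa using h2
  rcases hne with ⟨i, hi⟩
  apply Finset.sum_pos' (fun j _ => mul_self_nonneg _)
  exact ⟨i, Finset.mem_univ i, mul_self_pos.mpr hi⟩

noncomputable instance : Fintype (WeylGroup D) := @Fintype.ofFinite _ (weyl_finite D)

/-- The `W`-invariant positive definite form. -/
noncomputable def bform (x y : V) : ℚ :=
  ∑ w : WeylGroup D, bform₀ D (w.1 x) (w.1 y)

lemma bform_symm (x y : V) : bform D x y = bform D y x := by
  unfold bform bform₀
  apply Finset.sum_congr rfl
  intro w _
  exact Finset.sum_congr rfl fun i _ => mul_comm _ _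

lemma bform_add_left (x y z : V) : bform D (x + y) z = bform D x z + bform D y z := by
  unfold bform bform₀
  rw [← Finset.sum_add_distrib]
  apply Finset.sum_congr rfl
  intro w _
  rw [← Finset.sum_add_distrib]
  apply Finset.sum_congr rfl
  intro i _
  rw [map_add, map_add]
  simp only [Finsupp.add_apply]
  ring

lemma bform_smul_left (c : ℚ) (x y : V) : bform D (c • x) y = c * bform D x y := by
  unfold bform bform₀
  rw [Finset.mul_sum]
  apply Finset.sum_congr rfl
  intro w _
  rw [Finset.mul_sum]
  apply Finset.sum_congr rfl
  intro i _
  rw [map_smul, map_smul]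
  simp only [Finsupp.smul_apply, smul_eq_mul]
  ring

lemma bform_add_right (x y z : V) : bform D x (y + z) = bform D x y + bform D x z := by
  rw [bform_symm, bform_add_left, bform_symm D y x, bform_symm D z x]

lemma bform_smul_right (c : ℚ) (x y : V) : bform D x (c • y) = c * bform D x y := by
  rw [bform_symm, bform_smul_left, bform_symm D y x]

lemma bform_neg_left (x y : V) : bform D (-x) y = -bform D x y := by
  have := bform_smul_left D (-1) x y
  simpa using this

lemma bform_neg_right (x y : V) : bform D x (-y) = -bform D x y := by
  rw [bform_symm, bform_neg_left, bform_symm D y x]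

lemma bform_sub_left (x y z : V) : bform D (x - y) z = bform D x z - bform D y z := by
  rw [sub_eq_add_neg, bform_add_left, bform_neg_left]
  ring

lemma bform_sub_right (x y z : V) : bform D x (y - z) = bform D x y - bform D x z := by
  rw [bform_symm, bform_sub_left, bform_symm D y x, bform_symm D z x]

lemma bform_pos {x : V} (hx : x ≠ 0) : 0 < bform D x x := by
  unfold bform
  apply Finset.sum_pos
  · intro w _
    apply bform₀_pos
    simp only [ne_eq, EmbeddingLike.map_eq_zero_iff]
    exact hx
  · exact ⟨1, Finset.mem_univ 1⟩

lemma bform_nonneg_diag (x : V) : 0 ≤ bform D x x := by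
  rcases eq_or_ne x 0 with rfl | hx
  · unfold bform bform₀; simp
  · exact le_of_lt (bform_pos D hx)

/-- `W`-invariance of the form. -/
lemma bform_inv {w : V ≃ₗ[ℚ] V} (hw : w ∈ WeylGroup D) (x y : V) :
    bform D (w x) (w y) = bform D x y := by
  unfold bform
  rw [← Equiv.sum_comp (Equiv.mulRight (⟨w, hw⟩ : WeylGroup D))
    (fun u : WeylGroup D => bform₀ D (u.1 x) (u.1 y))]
  apply Finset.sum_congr rfl
  intro u _
  have h1 : ((Equiv.mulRight (⟨w, hw⟩ : WeylGroup D)) u).1 = u.1 * w := rfl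
  rw [h1]
  rfl

/-- The coroot in terms of the invariant form. -/
lemma coroot_bform {α : V} (hα : α ∈ D.Φ) (x : V) :
    D.coroot α x * bform D α α = 2 * bform D x α := by
  have hinv := bform_inv D (sref_mem_weyl D hα) x α
  have h1 : sref D α hα α = -α := sref_root D hα
  have h2 : sref D α hα x = x - D.coroot α x • α := rfl
  rw [h1, h2] at hinv
  rw [bform_neg_right, bform_sub_left, bform_smul_left] at hinv
  linarith

lemma bform_root_pos {α : V} (hα : α ∈ D.Φ) : 0 < bform D α α :=
  bform_pos D (D.root_ne_zero α hα)

lemma coroot_pos_iff {α : V} (hα : α ∈ D.Φ) (x : V) :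
    0 < D.coroot α x ↔ 0 < bform D x α := by
  have h := coroot_bform D hα x
  have hroot := bform_root_pos D hα
  constructor
  · intro hc; nlinarith
  · intro hb; nlinarith

/-- Strict Cauchy-Schwarz for non-proportional vectors. -/
lemma bform_cs {α β : V} (hα : α ≠ 0) (hnp : ∀ c : ℚ, β ≠ c • α) :
    bform D α β * bform D α β < bform D α α * bform D β β := by
  have hAA := bform_pos D hα
  set t : ℚ := bform D α β / bform D α α with ht
  have hne : β - t • α ≠ 0 := by
    intro h0
    exact hnp t (by rw [← sub_eq_zero]; exact h0)
  have hpos := bform_pos D hne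
  have hexp : bform D (β - t • α) (β - t • α)
      = bform D β β - t * bform D α β - t * bform D α β + t * t * bform D α α := by
    simp only [bform_sub_left, bform_sub_right, bform_smul_left, bform_smul_right]
    rw [bform_symm D β α]
    ring
  rw [hexp] at hpos
  have htAA : t * bform D α α = bform D α β := by
    rw [ht]; field_simp
  nlinarith

/-- The pair lemma: two distinct roots with positive inner product differ by a root. -/
lemma pair_lemma {α β : V} (hα : α ∈ D.Φ) (hβ : β ∈ D.Φ) (hb : 0 < bform D α β)
    (hne : α ≠ β) : α - β ∈ D.Φ := by
  -- not proportional
  have hnp : ∀ c : ℚ, β ≠ c • α := by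
    intro c hc
    have : c • α ∈ D.Φ := by rw [← hc]; exact hβ
    rcases D.reduced α hα c this with rfl | rfl
    · rw [hc] at hne; simp at hne
    · rw [hc] at hb
      rw [bform_smul_right] at hb
      have := bform_pos D (D.root_ne_zero α hα)
      nlinarith
  have hAA := bform_root_pos D hα
  have hBB := bform_root_pos D hβ
  -- coroot values
  have hp : 0 < D.coroot β α := (coroot_pos_iff D hβ α).mpr (by rwa [bform_symm] at hb ⊢)
  have hq : 0 < D.coroot α β := (coroot_pos_iff D hα β).mpr (by rwa [bform_symm D β α])
  rcases D.crystallographic β hβ α hα with ⟨n, hn⟩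
  rcases D.crystallographic α hα β hβ with ⟨m, hm⟩
  have hn1 : 1 ≤ n := by
    rw [hn] at hp; exact_mod_cast hp
  have hm1 : 1 ≤ m := by
    rw [hm] at hq; exact_mod_cast hq
  -- product bound
  have hcs := bform_cs D (D.root_ne_zero α hα) hnp
  have hpf : D.coroot β α * bform D β β = 2 * bform D α β := by
    have := coroot_bform D hβ α
    rwa [bform_symm D α β] at this ⊢
  have hqf : D.coroot α β * bform D α α = 2 * bform D α β := by
    have := coroot_bform D hα β
    rwa [bform_symm D β α] at this
  have hprod : D.coroot β α * D.coroot α β < 4 := by nlinarith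
  have hnm : n * m < 4 := by
    rw [hn, hm] at hprod; exact_mod_cast hprod
  have hone : n = 1 ∨ m = 1 := by
    by_contra hc
    push_neg at hc
    have h2n : 2 ≤ n := by omega
    have h2m : 2 ≤ m := by omega
    nlinarith
  rcases hone with h1 | h1
  · have : sref D β hβ α = α - β := by
      rw [sref_apply, hn, h1]
      norm_num
    rw [← this]
    exact sref_mem_phi D hβ hα
  · have : sref D α hα β = β - α := by
      rw [sref_apply, hm, h1]
      norm_num
    have hmem : β - α ∈ D.Φ := by rw [← this]; exact sref_mem_phi D hα hβ
    have := neg_mem_phi D hmem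
    rwa [neg_sub] at this

end RSAux
namespace RSAux

variable {V : Type} [AddCommGroup V] [Module ℚ V] (D : RootSystemData V)

lemma simple_phi {δ : V} (hδ : δ ∈ D.Δ) : δ ∈ D.Φ := D.pos_subset (D.simple_subset hδ)

lemma bform_zero_left (y : V) : bform D 0 y = 0 := by
  have := bform_smul_left D 0 0 y
  simpa using this

lemma bform_sum_left (s : Finset V) (f : V → V) (y : V) :
    bform D (∑ x ∈ s, f x) y = ∑ x ∈ s, bform D (f x) y := by
  classical
  induction s using Finset.cons_induction with
  | empty => simpa using bform_zero_left D y
  | cons a s ha ih => rw [Finset.sum_cons, Finset.sum_cons, bform_add_left, ih]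

/-- Any nonsimple positive root has a simple root subtractible from it. -/
lemma exists_simple_sub {β : V} (hβ : β ∈ D.Pos) (hnot : β ∉ D.Δ) :
    ∃ δ ∈ D.Δ, 0 < bform D β δ ∧ β - δ ∈ D.Pos := by
  have hβφ := D.pos_subset hβ
  have hBB := bform_root_pos D hβφ
  have hrep : bform D β β = ∑ δ ∈ D.Δ, (D.coeff β δ : ℚ) * bform D δ β := by
    have h0 := congrArg (fun v => bform D v β) (D.pos_combo β hβ)
    rw [h0, bform_sum_left]
    exact Finset.sum_congr rfl fun δ _ => bform_smul_left D _ δ β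
  have hex : ∃ δ ∈ D.Δ, 0 < (D.coeff β δ : ℚ) * bform D δ β := by
    by_contra h
    push_neg at h
    have : bform D β β ≤ 0 := by
      rw [hrep]; exact Finset.sum_nonpos h
    linarith
  rcases hex with ⟨δ, hδ, hpos⟩
  have hc : (0:ℚ) ≤ (D.coeff β δ : ℚ) := Nat.cast_nonneg _
  have hb : 0 < bform D δ β := by
    rcases le_or_gt (bform D δ β) 0 with h | h
    · nlinarith
    · exact h
  have hcoeff : 0 < (D.coeff β δ : ℚ) := by
    rcases eq_or_lt_of_le hc with h | h
    · rw [← h] at hpos; simp at hpos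
    · exact h
  have hne : β ≠ δ := fun h => hnot (h ▸ hδ)
  have hsub : β - δ ∈ D.Φ :=
    pair_lemma D hβφ (simple_phi D hδ) (by rwa [bform_symm D β δ]) hne
  refine ⟨δ, hδ, by rwa [bform_symm D β δ], ?_⟩
  -- positivity of β - δ
  rcases D.pos_or_neg _ hsub with hp | hn
  · exact hp
  · exfalso
    rw [neg_sub] at hn
    have hsum : (δ - β) + β = δ := by abel
    have hcadd := coeff_add D hn hβ (by rw [hsum]; exact D.simple_subset hδ)
    rw [hsum] at hcadd
    have h1 := hcadd δ hδ
    have hds := coeff_simple D hδ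
    -- coefficients of β vanish away from δ, and coeff β δ ≤ 1
    have hβδ : D.coeff β δ = 1 := by
      have := hds δ hδ
      simp at this
      have hd1 : D.coeff δ δ = 1 := by exact_mod_cast this
      have hc1 : 1 ≤ D.coeff β δ := by exact_mod_cast hcoeff
      omega
    have hβx : ∀ x ∈ D.Δ, x ≠ δ → D.coeff β x = 0 := by
      intro x hx hxne
      have h2 := hcadd x hx
      have := hds x hx
      rw [if_neg hxne] at this
      have hd0 : D.coeff δ x = 0 := by exact_mod_cast this
      omega
    have : β = δ := by
      rw [D.pos_combo β hβ]
      rw [Finset.sum_congr rfl (fun x hx => ?_)]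
      · exact (by
          rw [Finset.sum_ite_eq' D.Δ δ (fun x => x)]
          simp [hδ] : (∑ x ∈ D.Δ, if x = δ then x else 0) = δ)
      · by_cases hxδ : x = δ
        · rw [hxδ, hβδ, if_pos rfl]
          simp
        · rw [hβx x hx hxδ, if_neg hxδ]
          simp
    exact hne this

/-- Lemma A: a simple reflection permutes the positive roots other than `δ`. -/
lemma sref_simple_pos {δ : V} (hδ : δ ∈ D.Δ) {α : V} (hα : α ∈ D.Pos) (hne : α ≠ δ) :
    sref D δ (simple_phi D hδ) α ∈ D.Pos ∧ sref D δ (simple_phi D hδ) α ≠ δ := by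
  have hδφ := simple_phi D hδ
  have hαφ := D.pos_subset hα
  set k : ℚ := D.coroot δ α with hk
  -- α is not a multiple of δ
  have hnm : ∃ x ∈ D.Δ, x ≠ δ ∧ 0 < D.coeff α x := by
    by_contra h
    push_neg at h
    have hmul : α = (D.coeff α δ : ℚ) • δ := by
      have hz : ∀ x ∈ D.Δ, x ≠ δ → (D.coeff α x : ℚ) • x = 0 := by
        intro x hx hxne
        have hc0 := h x hx hxne
        have hc0' : D.coeff α x = 0 := by omega
        rw [hc0']; simp
      have hsum := D.pos_combo α hα
      rw [Finset.sum_eq_single δ hz (fun habs => absurd hδ habs)] at hsum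
      exact hsum
    have hroot : (D.coeff α δ : ℚ) • δ ∈ D.Φ := by rw [← hmul]; exact hαφ
    rcases D.reduced δ hδφ _ hroot with h1 | h1
    · rw [h1] at hmul; simp at hmul; exact hne hmul
    · rw [h1] at hmul
      rw [hmul] at hα
      simp only [neg_smul, one_smul] at hα
      exact D.pos_not_neg δ (D.simple_subset hδ) hα
  rcases hnm with ⟨x₀, hx₀, hx₀ne, hx₀pos⟩
  have hsphi : sref D δ hδφ α ∈ D.Φ := sref_mem_phi D hδφ hαφ
  have hrepr : sref D δ hδφ α = ∑ x ∈ D.Δ, ((D.coeff α x : ℚ) + (if x = δ then -k else 0)) • x := by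
    rw [Finset.sum_congr rfl (fun x _ => add_smul _ _ x), Finset.sum_add_distrib]
    have h2 : ∑ x ∈ D.Δ, (if x = δ then -k else 0) • x = -(k • δ) := by
      simp only [ite_smul, zero_smul]
      rw [Finset.sum_ite_eq' D.Δ δ (fun x => -k • x)]
      simp [hδ]
    rw [h2, ← D.pos_combo α hα, sref_apply]
    abel
  constructor
  · rcases D.pos_or_neg _ hsphi with hp | hn
    · exact hp
    · exfalso
      have hzero : ∑ x ∈ D.Δ, (((D.coeff α x : ℚ) + (if x = δ then -k else 0))
          + (D.coeff (-(sref D δ hδφ α)) x : ℚ)) • x = ∑ x ∈ D.Δ, (0:ℚ) • x := by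
        rw [Finset.sum_congr rfl (fun x _ => add_smul _ _ x), Finset.sum_add_distrib,
          ← hrepr, ← D.pos_combo _ hn]
        simp
      have hco := coeff_unique D hzero x₀ hx₀
      rw [if_neg hx₀ne] at hco
      have h3 : (0:ℚ) ≤ (D.coeff (-(sref D δ hδφ α)) x₀ : ℚ) := Nat.cast_nonneg _
      have h4 : (0:ℚ) < (D.coeff α x₀ : ℚ) := by exact_mod_cast hx₀pos
      linarith
  · intro habs
    have h5 := congrArg (sref D δ hδφ) habs
    rw [sref_sref, sref_root D hδφ] at h5
    rw [h5] at hα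
    exact D.pos_not_neg δ (D.simple_subset hδ) hα

lemma bform_msum_left (m : Multiset V) (y : V) :
    bform D m.sum y = (m.map (fun γ => bform D γ y)).sum := by
  induction m using Multiset.induction with
  | empty => simpa using bform_zero_left D y
  | cons a s ih =>
      rw [Multiset.sum_cons, Multiset.map_cons, Multiset.sum_cons, bform_add_left, ih]

/-- Lemma R: from a multiset of positive roots summing to a root, one can peel an element
leaving a positive-root sum. -/
lemma msum_peel {m : Multiset V} (hm : ∀ γ ∈ m, γ ∈ D.Pos) (h2 : 2 ≤ Multiset.card m)
    {σ : V} (hσ : σ ∈ D.Pos) (hsum : m.sum = σ) :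
    ∃ γ ∈ m, σ - γ ∈ D.Pos ∧ (m.erase γ).sum = σ - γ := by
  have hσφ := D.pos_subset hσ
  have hBB := bform_root_pos D hσφ
  have hrep : bform D σ σ = (m.map (fun γ => bform D γ σ)).sum := by
    rw [← hsum, bform_msum_left, hsum]
  have hex : ∃ γ ∈ m, 0 < bform D γ σ := by
    by_contra h
    push_neg at h
    have key : ∀ (l : Multiset ℚ), (∀ x ∈ l, x ≤ 0) → l.sum ≤ 0 := by
      intro l
      induction l using Multiset.induction with
      | empty => simp
      | cons a s ih =>
          intro hl
          rw [Multiset.sum_cons]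
          have h1 := hl a (Multiset.mem_cons_self a s)
          have h2 := ih (fun x hx => hl x (Multiset.mem_cons_of_mem hx))
          linarith
    have hnp : (m.map (fun γ => bform D γ σ)).sum ≤ 0 := by
      apply key
      intro x hx
      rcases Multiset.mem_map.mp hx with ⟨γ, hγ, rfl⟩
      exact h γ hγ
    linarith [hrep ▸ hnp]
  rcases hex with ⟨γ, hγm, hγb⟩
  have hγP := hm γ hγm
  have herase : (m.erase γ).sum = σ - γ := by
    have : m.sum = γ + (m.erase γ).sum := by
      conv_lhs => rw [← Multiset.cons_erase hγm]
      rw [Multiset.sum_cons]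
    rw [hsum] at this
    rw [eq_sub_iff_add_eq]
    rw [this]
    abel
  have hne : σ ≠ γ := by
    intro h0
    have hcard : (m.erase γ) ≠ 0 := by
      intro hz
      have := Multiset.card_erase_of_mem hγm
      rw [hz] at this
      simp at this
      omega
    apply msum_ne_zero D (fun x hx => hm x (Multiset.mem_of_mem_erase hx)) hcard
    rw [herase, h0]
    abel
  have hsub : σ - γ ∈ D.Φ :=
    pair_lemma D hσφ (D.pos_subset hγP) (by rwa [bform_symm D σ γ]) hne
  refine ⟨γ, hγm, ?_, herase⟩
  rw [← herase] at hsub ⊢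
  exact msum_pos D (fun x hx => hm x (Multiset.mem_of_mem_erase hx)) hsub

end RSAux
namespace RSAux

variable {V : Type} [AddCommGroup V] [Module ℚ V] (D : RootSystemData V)

/-- Product of simple reflections along a list. -/
noncomputable def sprod (L : List {δ // δ ∈ D.Δ}) : V ≃ₗ[ℚ] V :=
  (L.map (fun δ => sref D δ.1 (simple_phi D δ.2))).prod

lemma sprod_nil : sprod D [] = 1 := rfl

lemma sprod_cons (δ : {δ // δ ∈ D.Δ}) (L : List {δ // δ ∈ D.Δ}) :
    sprod D (δ :: L) = sref D δ.1 (simple_phi D δ.2) * sprod D L := by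
  unfold sprod
  rw [List.map_cons, List.prod_cons]

lemma sprod_append (L M : List {δ // δ ∈ D.Δ}) :
    sprod D (L ++ M) = sprod D L * sprod D M := by
  unfold sprod
  rw [List.map_append, List.prod_append]

lemma sref_mul_self {α : V} (hα : α ∈ D.Φ) :
    sref D α hα * sref D α hα = 1 := by
  apply LinearEquiv.toLinearMap_injective
  apply LinearMap.ext
  intro x
  exact sref_sref D hα x

lemma sprod_inv (L : List {δ // δ ∈ D.Δ}) : (sprod D L)⁻¹ = sprod D L.reverse := by
  induction L with
  | nil => simp [sprod_nil]
  | cons a t ih =>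
      rw [sprod_cons, List.reverse_cons, sprod_append, mul_inv_rev, ih]
      have hs : sprod D [a] = sref D a.1 (simple_phi D a.2) := by simp [sprod_cons, sprod_nil]
      rw [hs, inv_eq_of_mul_eq_one_right (sref_mul_self D (simple_phi D a.2))]

lemma sprod_mem_weyl (L : List {δ // δ ∈ D.Δ}) : sprod D L ∈ WeylGroup D := by
  induction L with
  | nil => exact (WeylGroup D).one_mem
  | cons a t ih =>
      rw [sprod_cons]
      exact (WeylGroup D).mul_mem (sref_mem_weyl D (simple_phi D a.2)) ih

/-- Every positive root is in the simple-reflection orbit of a simple root. -/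
lemma orbit_simple : ∀ n : ℕ, ∀ β, β ∈ D.Pos → rootHt D β ≤ n →
    ∃ (L : List {δ // δ ∈ D.Δ}) (δ : V) (hδ : δ ∈ D.Δ), β = sprod D L δ := by
  intro n
  induction n with
  | zero =>
      intro β hβ hht
      have := rootHt_pos D hβ
      omega
  | succ n ih =>
      intro β hβ hht
      by_cases hβΔ : β ∈ D.Δ
      · exact ⟨[], β, hβΔ, rfl⟩
      · rcases exists_simple_sub D hβ hβΔ with ⟨δ, hδ, hbf, _⟩
        have hδφ := simple_phi D hδ
        have hk : 0 < D.coroot δ β := (coroot_pos_iff D hδφ β).mpr hbf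
        have hne : β ≠ δ := fun h => hβΔ (h ▸ hδ)
        have hβ' := (sref_simple_pos D hδ hβ hne).1
        set β' := sref D δ hδφ β with hβ'def
        -- height decreases
        have hdecomp : β = β' + D.coroot δ β • δ := by
          rw [hβ'def, sref_apply]
          abel
        have hco : ∀ x ∈ D.Δ, (D.coeff β x : ℚ)
            = (D.coeff β' x : ℚ) + (if x = δ then D.coroot δ β else 0) := by
          apply coeff_unique D
          rw [Finset.sum_congr rfl (fun x _ => add_smul _ _ x), Finset.sum_add_distrib]
          have h2 : ∑ x ∈ D.Δ, (if x = δ then D.coroot δ β else 0) • x = D.coroot δ β • δ := by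
            simp only [ite_smul, zero_smul]
            rw [Finset.sum_ite_eq' D.Δ δ (fun x => D.coroot δ β • x)]
            simp [hδ]
          rw [h2, ← D.pos_combo β hβ, ← D.pos_combo β' hβ', ← hdecomp]
        have hht' : rootHt D β' < rootHt D β := by
          unfold rootHt
          apply Finset.sum_lt_sum
          · intro x hx
            have := hco x hx
            by_cases hxδ : x = δ
            · rw [if_pos hxδ] at this
              have : (D.coeff β' x : ℚ) ≤ (D.coeff β x : ℚ) := by linarith
              exact_mod_cast this
            · rw [if_neg hxδ, add_zero] at this
              exact_mod_cast le_of_eq this.symm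
          · refine ⟨δ, hδ, ?_⟩
            have := hco δ hδ
            rw [if_pos rfl] at this
            have : (D.coeff β' δ : ℚ) < (D.coeff β δ : ℚ) := by linarith
            exact_mod_cast this
        rcases ih β' hβ' (by omega) with ⟨L, ε, hε, hrep⟩
        refine ⟨⟨δ, hδ⟩ :: L, ε, hε, ?_⟩
        rw [sprod_cons]
        have : β = sref D δ hδφ β' := by
          rw [hβ'def, sref_sref]
        rw [this, hrep]
        rfl

/-- `sref` does not depend on the sign of the root. -/
lemma sref_neg {α : V} (hα : α ∈ D.Φ) :
    sref D (-α) (neg_mem_phi D hα) = sref D α hα := by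
  have hnφ := neg_mem_phi D hα
  have hval : ∀ x, D.coroot (-α) x = -(D.coroot α x) := by
    set h : V →ₗ[ℚ] ℚ := D.coroot α + D.coroot (-α) with hh
    have hhα : h α = 0 := by
      have h1 : D.coroot (-α) (-α) = 2 := D.coroot_self (-α) hnφ
      rw [map_neg] at h1
      simp only [hh, LinearMap.add_apply, D.coroot_self α hα]
      linarith
    have hmaps : ∀ β ∈ D.Φ, β - h β • α ∈ D.Φ := by
      intro β hβ
      have hcomp : β - h β • α = sref D α hα (sref D (-α) hnφ β) := by
        rw [sref_apply, sref_apply]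
        simp only [hh, LinearMap.add_apply, map_sub, map_smul, smul_eq_mul,
          D.coroot_self α hα]
        have h1 : D.coroot α (-α) = -2 := by
          rw [map_neg, D.coroot_self α hα]
        rw [h1]
        module
      rw [hcomp]
      exact sref_mem_phi D hα (sref_mem_phi D hnφ hβ)
    intro x
    have := transvection_trivial D hα h hhα hmaps x
    simp only [hh, LinearMap.add_apply] at this
    linarith
  apply LinearEquiv.toLinearMap_injective
  apply LinearMap.ext
  intro x
  show sref D (-α) hnφ x = sref D α hα x
  rw [sref_apply, sref_apply, hval x]
  module

/-- Conjugation formula at the level of group elements. -/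
lemma sref_conj_eq {u : V ≃ₗ[ℚ] V} (hu : u ∈ WeylGroup D) {γ : V} (hγ : γ ∈ D.Φ) :
    sref D (u γ) (weyl_phi D hu hγ) = u * sref D γ hγ * u⁻¹ := by
  apply LinearEquiv.toLinearMap_injective
  apply LinearMap.ext
  intro x
  have h := sref_conj D (weyl_maps_phi D hu).1 (weyl_maps_phi D hu).2 hγ x
  have h2 : (weyl_maps_phi D hu).1 γ hγ = weyl_phi D hu hγ := rfl
  rw [h2] at h  -- may be defeq anyway
  show sref D (u γ) (weyl_phi D hu hγ) x = u (sref D γ hγ (u⁻¹ x))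
  exact h

/-- Every element of the Weyl group is a product of simple reflections. -/
lemma weyl_word {w : V ≃ₗ[ℚ] V} (hw : w ∈ WeylGroup D) :
    ∃ L : List {δ // δ ∈ D.Δ}, w = sprod D L := by
  induction hw using Subgroup.closure_induction with
  | mem g hg =>
      rcases hg with ⟨α, hα, hrefl⟩
      have hg_eq : g = sref D α hα := by
        apply LinearEquiv.toLinearMap_injective
        apply LinearMap.ext
        intro x
        exact hrefl x
      -- reduce to the case of a positive root
      have hkey : ∀ β, (hβφ : β ∈ D.Φ) → β ∈ D.Pos →
          ∃ L : List {δ // δ ∈ D.Δ}, sref D β hβφ = sprod D L := by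
        intro β hβφ hβ
        rcases orbit_simple D (rootHt D β) β hβ le_rfl with ⟨L, δ, hδ, hrep⟩
        have hu := sprod_mem_weyl D L
        have hβu : β = sprod D L δ := hrep
        have := sref_conj_eq D hu (simple_phi D hδ)
        refine ⟨L ++ [⟨δ, hδ⟩] ++ L.reverse, ?_⟩
        have hcast : sref D β hβφ = sref D (sprod D L δ) (weyl_phi D hu (simple_phi D hδ)) := by
          congr 1
        rw [hcast, this]
        rw [sprod_append, sprod_append, sprod_inv D L]
        have : sprod D [⟨δ, hδ⟩] = sref D δ (simple_phi D hδ) := by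
          simp [sprod_cons, sprod_nil]
        rw [this]
      rcases D.pos_or_neg α hα with hp | hn
      · rcases hkey α hα hp with ⟨L, hL⟩
        exact ⟨L, by rw [hg_eq, hL]⟩
      · rcases hkey (-α) (neg_mem_phi D hα) hn with ⟨L, hL⟩
        refine ⟨L, ?_⟩
        rw [hg_eq, ← sref_neg D hα, hL]
  | one => exact ⟨[], rfl⟩
  | mul x y _ _ hx hy =>
      rcases hx with ⟨L, rfl⟩
      rcases hy with ⟨M, rfl⟩
      exact ⟨L ++ M, (sprod_append D L M).symm⟩
  | inv x _ hx =>
      rcases hx with ⟨L, rfl⟩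
      exact ⟨L.reverse, sprod_inv D L⟩

end RSAux
namespace RSAux

variable {V : Type} [AddCommGroup V] [Module ℚ V] (D : RootSystemData V)

/-- A nonnegative combination of positive roots that is a root is positive. -/
lemma combo_pos_of_pos (c : V → ℚ) (f : V → V) (hc : ∀ δ ∈ D.Δ, 0 ≤ c δ)
    (hf : ∀ δ ∈ D.Δ, f δ ∈ D.Pos) (hφ : (∑ δ ∈ D.Δ, c δ • f δ) ∈ D.Φ) :
    (∑ δ ∈ D.Δ, c δ • f δ) ∈ D.Pos := by
  have hrw : ∑ δ ∈ D.Δ, c δ • f δ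
      = ∑ x ∈ D.Δ, (∑ δ ∈ D.Δ, c δ * (D.coeff (f δ) x : ℚ)) • x := by
    have h1 : ∀ δ ∈ D.Δ, c δ • f δ = ∑ x ∈ D.Δ, (c δ * (D.coeff (f δ) x : ℚ)) • x := by
      intro δ hδ
      conv_lhs => rw [D.pos_combo (f δ) (hf δ hδ)]
      rw [Finset.smul_sum]
      exact Finset.sum_congr rfl fun x _ => by rw [smul_smul]
    rw [Finset.sum_congr rfl h1, Finset.sum_comm]
    apply Finset.sum_congr rfl
    intro x _
    rw [Finset.sum_smul]
  rw [hrw] at hφ ⊢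
  apply combo_pos D _ hφ
  intro x hx
  apply Finset.sum_nonneg
  intro δ hδ
  have := hc δ hδ
  positivity

/-- If `w` makes no simple root negative, it makes no positive root negative. -/
lemma pos_of_all_simples_pos {w : V ≃ₗ[ℚ] V} (hw : w ∈ WeylGroup D)
    (h : ∀ δ ∈ D.Δ, w δ ∈ D.Pos) {α : V} (hα : α ∈ D.Pos) : w α ∈ D.Pos := by
  have hrw : w α = ∑ δ ∈ D.Δ, (D.coeff α δ : ℚ) • w δ := by
    conv_lhs => rw [D.pos_combo α hα]
    rw [map_sum]
    exact Finset.sum_congr rfl fun δ _ => by rw [map_smul]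
  rw [hrw]
  apply combo_pos_of_pos D _ _ (fun δ _ => Nat.cast_nonneg _) h
  rw [← hrw]
  exact weyl_phi D hw (D.pos_subset hα)

/-- Key step of the exchange condition. -/
lemma exchange : ∀ (L : List {δ // δ ∈ D.Δ}) {δ : V} (hδ : δ ∈ D.Δ),
    -(sprod D L δ) ∈ D.Pos →
    ∃ M : List {δ // δ ∈ D.Δ}, M.length + 1 = L.length ∧
      sprod D M = sprod D L * sref D δ (simple_phi D hδ) := by
  intro L
  induction L with
  | nil =>
      intro δ hδ h
      rw [sprod_nil] at h
      have h' : -δ ∈ D.Pos := h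
      exact absurd h' (D.pos_not_neg δ (D.simple_subset hδ))
  | cons a t ih =>
      intro δ hδ h
      by_cases hcase : -(sprod D t δ) ∈ D.Pos
      · rcases ih hδ hcase with ⟨M, hlen, hM⟩
        refine ⟨a :: M, by simp [hlen], ?_⟩
        rw [sprod_cons, hM, sprod_cons, mul_assoc]
      · have hu := sprod_mem_weyl D t
        set u := sprod D t with hu_def
        have hβφ : u δ ∈ D.Φ := weyl_phi D hu (simple_phi D hδ)
        have hβpos : u δ ∈ D.Pos := pos_of_phi_not_neg D hβφ hcase
        have heq : u δ = a.1 := by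
          by_contra hne
          have hpos := (sref_simple_pos D a.2 hβpos hne).1
          rw [sprod_cons] at h
          have : (sref D a.1 (simple_phi D a.2) * u) δ
              = sref D a.1 (simple_phi D a.2) (u δ) := rfl
          rw [this] at h
          exact D.pos_not_neg _ hpos h
        refine ⟨t, by simp, ?_⟩
        apply LinearEquiv.toLinearMap_injective
        apply LinearMap.ext
        intro x
        show u x = (sprod D (a :: t) * sref D δ (simple_phi D hδ)) x
        rw [sprod_cons]
        have hstep : (sref D a.1 (simple_phi D a.2) * u * sref D δ (simple_phi D hδ)) x
            = sref D a.1 (simple_phi D a.2) (u (sref D δ (simple_phi D hδ) x)) := rfl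
        rw [hstep]
        have hfun : ∀ z, sref D a.1 (simple_phi D a.2) z = z - D.coroot (u δ) z • (u δ) := by
          intro z
          rw [sref_apply, heq]
        rw [hfun]
        have hconj := sref_conj D (weyl_maps_phi D hu).1 (weyl_maps_phi D hu).2
          (simple_phi D hδ) (u (sref D δ (simple_phi D hδ) x))
        have hs : sref D (u δ) ((weyl_maps_phi D hu).1 δ (simple_phi D hδ))
            (u (sref D δ (simple_phi D hδ) x))
            = u (sref D δ (simple_phi D hδ) x) - D.coroot (u δ)
              (u (sref D δ (simple_phi D hδ) x)) • (u δ) := rfl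
        rw [hs] at hconj
        rw [hconj]
        rw [LinearEquiv.symm_apply_apply, sref_sref]

/-- A product of simple reflections preserving the positive roots is the identity. -/
lemma sprod_pos_eq_one : ∀ n (L : List {δ // δ ∈ D.Δ}), L.length ≤ n →
    (∀ α ∈ D.Pos, sprod D L α ∈ D.Pos) → sprod D L = 1 := by
  intro n
  induction n with
  | zero =>
      intro L hlen _
      have : L = [] := List.length_eq_zero_iff.mp (by omega)
      rw [this, sprod_nil]
  | succ n ih =>
      intro L hlen hpos
      rcases List.eq_nil_or_concat L with rfl | ⟨T, a, rfl⟩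
      · rw [sprod_nil]
      · rw [List.concat_eq_append] at hlen hpos ⊢
        have hsa : sprod D [a] = sref D a.1 (simple_phi D a.2) := by
          simp [sprod_cons, sprod_nil]
        have hT : sprod D (T ++ [a]) = sprod D T * sref D a.1 (simple_phi D a.2) := by
          rw [sprod_append, hsa]
        have hwa : sprod D (T ++ [a]) a.1 ∈ D.Pos :=
          hpos a.1 (D.simple_subset a.2)
        have hneg : -(sprod D T a.1) ∈ D.Pos := by
          have h1 : sprod D (T ++ [a]) a.1 = sprod D T (sref D a.1 (simple_phi D a.2) a.1) := by
            rw [hT]; rfl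
          rw [sref_root D (simple_phi D a.2), map_neg] at h1
          rw [h1] at hwa
          exact hwa
        rcases exchange D T a.2 hneg with ⟨M, hlen2, hM⟩
        have hMw : sprod D M = sprod D (T ++ [a]) := by
          rw [hM, hT]
        have hlen3 : M.length ≤ n := by
          have hTa : (T ++ [a]).length = T.length + 1 := by simp
          omega
        rw [← hMw]
        apply ih M hlen3
        intro α hα
        rw [hMw]
        exact hpos α hα

lemma weyl_pos_eq_one {w : V ≃ₗ[ℚ] V} (hw : w ∈ WeylGroup D)
    (h : ∀ α ∈ D.Pos, w α ∈ D.Pos) : w = 1 := by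
  rcases weyl_word D hw with ⟨L, rfl⟩
  exact sprod_pos_eq_one D L.length L le_rfl h

lemma negSet_empty_iff {w : V ≃ₗ[ℚ] V} (hw : w ∈ WeylGroup D) :
    negSet D w = ∅ ↔ w = 1 := by
  constructor
  · intro h
    apply weyl_pos_eq_one D hw
    intro α hα
    apply w_pos_of_not_negSet D hw hα
    rw [h]
    exact Finset.notMem_empty α
  · intro h
    rw [h]
    apply Finset.eq_empty_of_forall_notMem
    intro α hα
    rw [mem_negSet D] at hα
    exact D.pos_not_neg α hα.1 hα.2

/-- `N(w)` determines `w`. -/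
lemma negSet_inj {w₁ w₂ : V ≃ₗ[ℚ] V} (h₁ : w₁ ∈ WeylGroup D) (h₂ : w₂ ∈ WeylGroup D)
    (h : negSet D w₁ = negSet D w₂) : w₁ = w₂ := by
  have hu : w₁ * w₂⁻¹ ∈ WeylGroup D := (WeylGroup D).mul_mem h₁ ((WeylGroup D).inv_mem h₂)
  have hpos : ∀ β ∈ D.Pos, (w₁ * w₂⁻¹) β ∈ D.Pos := by
    intro β hβ
    have happ : (w₁ * w₂⁻¹) β = w₁ (w₂.symm β) := rfl
    have hγφ : w₂.symm β ∈ D.Φ := weyl_phi_symm D h₂ (D.pos_subset hβ)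
    rcases D.pos_or_neg _ hγφ with hp | hn
    · have hnot : w₂.symm β ∉ negSet D w₂ := by
        rw [mem_negSet D]
        rintro ⟨-, habs⟩
        rw [LinearEquiv.apply_symm_apply] at habs
        exact D.pos_not_neg β hβ habs
      rw [← h] at hnot
      rw [happ]
      exact w_pos_of_not_negSet D h₁ hp hnot
    · have hmem : -(w₂.symm β) ∈ negSet D w₂ := by
        apply mem_negSet_of D hn
        rw [map_neg, LinearEquiv.apply_symm_apply, neg_neg]
        exact hβ
      rw [← h, mem_negSet D] at hmem
      rcases hmem with ⟨-, habs⟩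
      rw [map_neg, neg_neg] at habs
      rw [happ]
      exact habs
  have := weyl_pos_eq_one D hu hpos
  have h2 : w₁ * w₂⁻¹ * w₂ = 1 * w₂ := by rw [this]
  rwa [inv_mul_cancel_right, one_mul] at h2

/-- If `w ≠ 1` then some simple root is sent negative. -/
lemma exists_simple_descent {w : V ≃ₗ[ℚ] V} (hw : w ∈ WeylGroup D) (hne : w ≠ 1) :
    ∃ δ ∈ D.Δ, -(w δ) ∈ D.Pos := by
  by_contra h
  push_neg at h
  apply hne
  apply weyl_pos_eq_one D hw
  intro α hα
  apply pos_of_all_simples_pos D hw _ hα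
  intro δ hδ
  exact pos_of_phi_not_neg D (weyl_phi D hw (simple_phi D hδ)) (h δ hδ)

end RSAux
namespace RSAux

variable {V : Type} [AddCommGroup V] [Module ℚ V] (D : RootSystemData V)

lemma map_neg_w_sum (w : V ≃ₗ[ℚ] V) (m : Multiset V) :
    -(w m.sum) = (m.map (fun γ => -(w γ))).sum := by
  induction m using Multiset.induction with
  | empty => simp
  | cons a s ih =>
      rw [Multiset.sum_cons, Multiset.map_cons, Multiset.sum_cons, map_add, ← ih]
      abel

lemma mne_zero_left {m₁ m₂ : Multiset V} (hne : m₁ ≠ 0) : m₁ + m₂ ≠ 0 := by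
  intro h0
  have hc := congrArg Multiset.card h0
  rw [Multiset.card_add, Multiset.card_zero] at hc
  exact hne (Multiset.card_eq_zero.mp (by omega))

/-- The set of positive roots expressible as a nonempty sum of elements of `Y`. -/
noncomputable def sclose (Y : Finset V) : Finset V :=
  D.Pos.filter (fun σ => ∃ m : Multiset V, m ≠ 0 ∧ (∀ y ∈ m, y ∈ Y) ∧ m.sum = σ)

lemma mem_sclose {Y : Finset V} {σ : V} :
    σ ∈ sclose D Y ↔ σ ∈ D.Pos ∧ ∃ m : Multiset V, m ≠ 0 ∧ (∀ y ∈ m, y ∈ Y) ∧ m.sum = σ :=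
  Finset.mem_filter

lemma subset_sclose {Y : Finset V} (hY : Y ⊆ D.Pos) : Y ⊆ sclose D Y := by
  intro y hy
  rw [mem_sclose]
  exact ⟨hY hy, {y}, by simp, by simpa using hy, by simp⟩

lemma sclose_subset_pos {Y : Finset V} : sclose D Y ⊆ D.Pos := Finset.filter_subset _ _

lemma sclose_add {Y : Finset V} {σ₁ σ₂ : V} (h₁ : σ₁ ∈ sclose D Y) (h₂ : σ₂ ∈ sclose D Y)
    (h : σ₁ + σ₂ ∈ D.Φ) : σ₁ + σ₂ ∈ sclose D Y := by
  rw [mem_sclose] at h₁ h₂ ⊢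
  rcases h₁ with ⟨hp₁, m₁, hm₁ne, hm₁, hs₁⟩
  rcases h₂ with ⟨hp₂, m₂, hm₂ne, hm₂, hs₂⟩
  refine ⟨add_pos_mem D hp₁ hp₂ h, m₁ + m₂, mne_zero_left hm₁ne, ?_, ?_⟩
  · intro y hy
    rcases Multiset.mem_add.mp hy with h1 | h2
    · exact hm₁ y h1
    · exact hm₂ y h2
  · rw [Multiset.sum_add, hs₁, hs₂]

lemma sclose_add_elt {Y : Finset V} (hY : Y ⊆ D.Pos) {σ y : V} (hσ : σ ∈ sclose D Y)
    (hy : y ∈ Y) (h : σ + y ∈ D.Φ) : σ + y ∈ sclose D Y :=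
  sclose_add D hσ (subset_sclose D hY hy) h

/-- A sum of elements of `N(w)` that is a positive root lies in `N(w)`. -/
lemma negSet_msum {w : V ≃ₗ[ℚ] V} (hw : w ∈ WeylGroup D) {m : Multiset V}
    (hm : ∀ γ ∈ m, γ ∈ negSet D w) (hne : m ≠ 0) (hσ : m.sum ∈ D.Pos) :
    m.sum ∈ negSet D w := by
  apply mem_negSet_of D hσ
  rw [map_neg_w_sum]
  apply msum_pos D
  · intro x hx
    rcases Multiset.mem_map.mp hx with ⟨γ, hγ, rfl⟩
    exact ((mem_negSet D).mp (hm γ hγ)).2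
  · rw [← map_neg_w_sum]
    exact neg_mem_phi D (weyl_phi D hw (D.pos_subset hσ))

/-- Extracting the `M(w) ⊆ I` form of the boundary condition. -/
lemma scond_M {I : Finset V} {w : V ≃ₗ[ℚ] V}
    (hS : ∀ δ ∈ D.Δ, w.symm δ ∈ (I.image fun α => -α) ∪ D.Pos)
    {γ : V} (hγ : γ ∈ D.Pos) (hδ : -(w γ) ∈ D.Δ) : γ ∈ I := by
  have h1 := hS _ hδ
  have h2 : w.symm (-(w γ)) = -γ := by
    rw [map_neg, LinearEquiv.symm_apply_apply]
  rw [h2] at h1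
  rcases Finset.mem_union.mp h1 with h3 | h3
  · rcases Finset.mem_image.mp h3 with ⟨α, hα, hα2⟩
    have : α = γ := by
      have := neg_injective hα2
      rw [this]
    rwa [← this]
  · exact absurd h3 (D.pos_not_neg γ hγ)

lemma scond_of_M {I : Finset V} {w : V ≃ₗ[ℚ] V} (hw : w ∈ WeylGroup D)
    (h : ∀ γ ∈ D.Pos, -(w γ) ∈ D.Δ → γ ∈ I) :
    ∀ δ ∈ D.Δ, w.symm δ ∈ (I.image fun α => -α) ∪ D.Pos := by
  intro δ hδ
  have hφ : w.symm δ ∈ D.Φ := weyl_phi_symm D hw (simple_phi D hδ)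
  rcases D.pos_or_neg _ hφ with hp | hn
  · exact Finset.mem_union_right _ hp
  · apply Finset.mem_union_left
    apply Finset.mem_image.mpr
    refine ⟨-(w.symm δ), h _ hn ?_, by simp⟩
    rw [map_neg, LinearEquiv.apply_symm_apply, neg_neg]
    exact hδ

/-- `N(w) ∩ I` is of Weyl type, for any `w ∈ W`. -/
lemma trace_weyltype {I : Finset V} (hI : IsLowerIdealOf D.Pos I) {w : V ≃ₗ[ℚ] V}
    (hw : w ∈ WeylGroup D) : IsWeylType I (negSet D w ∩ I) := by
  refine ⟨Finset.inter_subset_right, ?_, ?_⟩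
  · intro α hα β hβ hsum
    rcases Finset.mem_inter.mp hα with ⟨hαN, hαI⟩
    rcases Finset.mem_inter.mp hβ with ⟨hβN, hβI⟩
    apply Finset.mem_inter.mpr
    refine ⟨?_, hsum⟩
    apply mem_negSet_of D (hI.1 hsum)
    have hφ : -(w (α + β)) ∈ D.Φ :=
      neg_mem_phi D (weyl_phi D hw (D.pos_subset (hI.1 hsum)))
    have hrw : -(w (α + β)) = -(w α) + -(w β) := by
      rw [map_add]; abel
    rw [hrw] at hφ ⊢
    exact add_pos_mem D ((mem_negSet D).mp hαN).2 ((mem_negSet D).mp hβN).2 hφ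
  · intro γ hγ δ hδ hγn hδn hsum
    intro habs
    rcases Finset.mem_inter.mp habs with ⟨hN, -⟩
    have hγN : γ ∉ negSet D w := fun h => hγn (Finset.mem_inter.mpr ⟨h, hγ⟩)
    have hδN : δ ∉ negSet D w := fun h => hδn (Finset.mem_inter.mpr ⟨h, hδ⟩)
    have h1 : w γ ∈ D.Pos := w_pos_of_not_negSet D hw (hI.1 hγ) hγN
    have h2 : w δ ∈ D.Pos := w_pos_of_not_negSet D hw (hI.1 hδ) hδN
    have hφ : w (γ + δ) ∈ D.Φ := weyl_phi D hw (D.pos_subset (hI.1 hsum))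
    have h3 : w (γ + δ) ∈ D.Pos := by
      rw [map_add] at hφ ⊢
      exact add_pos_mem D h1 h2 hφ
    exact D.pos_not_neg _ h3 ((mem_negSet D).mp hN).2

/-- Extract an element with positive pairing from a multiset sum. -/
lemma exists_pos_bform {m : Multiset V} (hne : m ≠ 0) {v : V} (hv : v ≠ 0)
    (hsum : m.sum = v) : ∃ γ ∈ m, 0 < bform D γ v := by
  by_contra h
  push_neg at h
  have key : ∀ (l : Multiset ℚ), (∀ x ∈ l, x ≤ 0) → l.sum ≤ 0 := by
    intro l
    induction l using Multiset.induction with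
    | empty => simp
    | cons a s ih =>
        intro hl
        rw [Multiset.sum_cons]
        have h1 := hl a (Multiset.mem_cons_self a s)
        have h2 := ih (fun x hx => hl x (Multiset.mem_cons_of_mem hx))
        linarith
  have hb : bform D v v = (m.map (fun γ => bform D γ v)).sum := by
    rw [← hsum, bform_msum_left, hsum]
  have hnp : (m.map (fun γ => bform D γ v)).sum ≤ 0 := by
    apply key
    intro x hx
    rcases Multiset.mem_map.mp hx with ⟨γ, hγ, rfl⟩
    exact h γ hγ
  have := bform_pos D hv
  linarith [hb ▸ hnp]

/-- Two multisets of positive roots cannot have opposite nonzero sums. -/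
lemma msum_not_opposite {m₁ m₂ : Multiset V} (h₁ : ∀ γ ∈ m₁, γ ∈ D.Pos)
    (h₂ : ∀ γ ∈ m₂, γ ∈ D.Pos) (hne : m₁ ≠ 0) (hopp : m₁.sum = -(m₂.sum)) : False := by
  apply msum_ne_zero D (m := m₁ + m₂) ?_ (mne_zero_left hne) ?_
  · intro γ hγ
    rcases Multiset.mem_add.mp hγ with h | h
    · exact h₁ γ h
    · exact h₂ γ h
  · rw [Multiset.sum_add, hopp]
    abel

/-- Lemma E: peeling off a non-inverted root. -/
lemma lemE {I : Finset V} (hI : IsLowerIdealOf D.Pos I) {w : V ≃ₗ[ℚ] V}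
    (hw : w ∈ WeylGroup D) :
    ∀ n (m : Multiset V), Multiset.card m ≤ n → m ≠ 0 →
    (∀ y ∈ m, y ∈ negSet D w ∩ I) →
    ∀ α c : V, α ∈ negSet D w → c ∈ D.Pos → c ∉ negSet D w → α + c = m.sum →
    α ∈ sclose D (negSet D w ∩ I) := by
  intro n
  induction n with
  | zero =>
      intro m hcard hne
      exact absurd (Multiset.card_eq_zero.mp (Nat.le_zero.mp hcard)) hne
  | succ n ih =>
      intro m hcard hne hm α c hαN hcP hcN hsum
      set Y := negSet D w ∩ I with hY
      have hYP : Y ⊆ D.Pos := fun y hy =>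
        ((mem_negSet D).mp (Finset.mem_inter.mp hy).1).1
      have hαP : α ∈ D.Pos := ((mem_negSet D).mp hαN).1
      have hαφ : α ∈ D.Φ := D.pos_subset hαP
      have hcφ : c ∈ D.Φ := D.pos_subset hcP
      rcases eq_or_lt_of_le (Nat.one_le_iff_ne_zero.mpr
        (fun h => hne (Multiset.card_eq_zero.mp h))) with h1 | h2
      · -- singleton case
        rcases Multiset.card_eq_one.mp h1.symm with ⟨y, rfl⟩
        have hy : y ∈ Y := hm y (by simp)
        have hyI : y ∈ I := (Finset.mem_inter.mp hy).2
        simp only [Multiset.sum_singleton] at hsum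
        have hαI : α ∈ I := by
          have := hI.2 y hyI c hcP (by rw [← hsum]; simpa using hαP)
          rwa [← hsum, add_sub_cancel_right] at this
        exact subset_sclose D hYP (Finset.mem_inter.mpr ⟨hαN, hαI⟩)
      · -- at least two elements
        by_cases hA : ∃ y ∈ m, 0 < bform D y c
        · rcases hA with ⟨y, hym, hyb⟩
          have hyY := hm y hym
          have hyN : y ∈ negSet D w := (Finset.mem_inter.mp hyY).1
          have hyI : y ∈ I := (Finset.mem_inter.mp hyY).2
          have hyP : y ∈ D.Pos := hYP hyY
          have hyne : y ≠ c := by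
            rintro rfl
            exact hcN hyN
          have hz : y - c ∈ D.Φ :=
            pair_lemma D (D.pos_subset hyP) hcφ hyb hyne
          have herase : (m.erase y).sum = m.sum - y := by
            have : m.sum = y + (m.erase y).sum := by
              conv_lhs => rw [← Multiset.cons_erase hym]
              rw [Multiset.sum_cons]
            rw [this]; abel
          rcases D.pos_or_neg _ hz with hzp | hzn
          · -- z = y - c positive : z ∈ Y and α = erase.sum + z
            have hzN : y - c ∈ negSet D w := by
              apply mem_negSet_of D hzp
              have hrw : -(w (y - c)) = -(w y) + w c := by
                rw [map_sub]; abel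
              rw [hrw]
              apply add_pos_mem D ((mem_negSet D).mp hyN).2
                (w_pos_of_not_negSet D hw hcP hcN)
              rw [← hrw]
              exact neg_mem_phi D (weyl_phi D hw hz)
            have hzI : y - c ∈ I := hI.2 y hyI c hcP hzp
            have hzY : y - c ∈ Y := Finset.mem_inter.mpr ⟨hzN, hzI⟩
            rw [mem_sclose]
            refine ⟨hαP, (y - c) ::ₘ m.erase y, by simp, ?_, ?_⟩
            · intro x hx
              rcases Multiset.mem_cons.mp hx with rfl | hx2
              · exact hzY
              · exact hm x (Multiset.mem_of_mem_erase hx2)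
            · rw [Multiset.sum_cons, herase, ← hsum]
              abel
          · -- z = y - c negative : recurse with c' = c - y
            rw [neg_sub] at hzn
            have hc'N : c - y ∉ negSet D w := by
              intro hmem
              apply D.pos_not_neg (w (c - y)) ?_ ((mem_negSet D).mp hmem).2
              have hrw : w (c - y) = w c + -(w y) := by
                rw [map_sub]; abel
              rw [hrw]
              apply add_pos_mem D (w_pos_of_not_negSet D hw hcP hcN)
                ((mem_negSet D).mp hyN).2
              rw [← hrw]
              exact weyl_phi D hw (D.pos_subset hzn)
            have hsum' : α + (c - y) = (m.erase y).sum := by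
              rw [herase, ← hsum]
              abel
            have hpred : Multiset.card (m.erase y) = Multiset.card m - 1 :=
              Multiset.card_erase_of_mem hym
            have hcard' : Multiset.card (m.erase y) ≤ n := by omega
            have hne' : m.erase y ≠ 0 := by
              intro h0
              rw [h0, Multiset.card_zero] at hpred
              omega
            exact ih (m.erase y) hcard' hne'
              (fun x hx => hm x (Multiset.mem_of_mem_erase hx)) α (c - y) hαN hzn hc'N hsum'
        · -- Case B : all pairings with c nonpositive
          push_neg at hA
          have hvne : α + c ≠ 0 := by
            intro h0
            have : c = -α := eq_neg_of_add_eq_zero_right h0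
            rw [this] at hcP
            exact D.pos_not_neg α hαP hcP
          rcases exists_pos_bform D hne hvne hsum.symm with ⟨y, hym, hyb⟩
          have hyY := hm y hym
          have hyN : y ∈ negSet D w := (Finset.mem_inter.mp hyY).1
          have hyI : y ∈ I := (Finset.mem_inter.mp hyY).2
          have hyP : y ∈ D.Pos := hYP hyY
          have hybα : 0 < bform D y α := by
            rw [bform_add_right] at hyb
            have := hA y hym
            linarith
          by_cases hyα : y = α
          · exact subset_sclose D hYP (hyα ▸ hyY)
          · have hz : α - y ∈ D.Φ := pair_lemma D hαφ (D.pos_subset hyP)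
              (by rwa [bform_symm D α y]) (fun h => hyα h.symm)
            have herase : (m.erase y).sum = m.sum - y := by
              have : m.sum = y + (m.erase y).sum := by
                conv_lhs => rw [← Multiset.cons_erase hym]
                rw [Multiset.sum_cons]
              rw [this]; abel
            rcases D.pos_or_neg _ hz with hzp | hzn
            · -- z = α - y positive
              by_cases hzN : α - y ∈ negSet D w
              · have hsum' : (α - y) + c = (m.erase y).sum := by
                  rw [herase, ← hsum]; abel
                have hpred : Multiset.card (m.erase y) = Multiset.card m - 1 :=
                  Multiset.card_erase_of_mem hym
                have hcard' : Multiset.card (m.erase y) ≤ n := by omega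
                have hne' : m.erase y ≠ 0 := by
                  intro h0
                  rw [h0, Multiset.card_zero] at hpred
                  omega
                have hrec := ih (m.erase y) hcard' hne'
                  (fun x hx => hm x (Multiset.mem_of_mem_erase hx)) (α - y) c hzN hcP hcN hsum'
                have : α = (α - y) + y := by abel
                rw [this]
                exact sclose_add_elt D hYP hrec hyY (by rw [← this]; exact hαφ)
              · -- contradiction : two positive sums are opposite
                exfalso
                have hzpos : w (α - y) ∈ D.Pos :=
                  w_pos_of_not_negSet D hw hzp hzN
                have hcpos : w c ∈ D.Pos := w_pos_of_not_negSet D hw hcP hcN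
                apply msum_not_opposite D (m₁ := {w (α - y), w c})
                  (m₂ := (m.erase y).map (fun γ => -(w γ)))
                · intro γ hγ
                  rcases Multiset.mem_cons.mp hγ with rfl | hγ2
                  · exact hzpos
                  · rcases Multiset.mem_singleton.mp hγ2 with rfl
                    exact hcpos
                · intro γ hγ
                  rcases Multiset.mem_map.mp hγ with ⟨x, hx, rfl⟩
                  exact ((mem_negSet D).mp
                    (Finset.mem_inter.mp (hm x (Multiset.mem_of_mem_erase hx))).1).2
                · simp
                · -- sums are opposite
                  rw [Multiset.sum_pair, ← map_neg_w_sum, herase, ← hsum]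
                  rw [neg_neg]
                  rw [show α + c - y = (α - y) + c by abel, map_add]
            · -- z = α - y negative : α ∈ I directly
              rw [neg_sub] at hzn
              have hαI : α ∈ I := by
                have := hI.2 y hyI (y - α) hzn ?_
                · rwa [sub_sub_cancel] at this
                · rw [sub_sub_cancel]
                  exact hαP
              exact subset_sclose D hYP (Finset.mem_inter.mpr ⟨hαN, hαI⟩)

end RSAux
namespace RSAux

variable {V : Type} [AddCommGroup V] [Module ℚ V] (D : RootSystemData V)

/-- H1: every inverted root is a sum of inverted roots from the ideal. -/
lemma negSet_subset_sclose {I : Finset V} (hI : IsLowerIdealOf D.Pos I) {w : V ≃ₗ[ℚ] V}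
    (hw : w ∈ WeylGroup D)
    (hS : ∀ δ ∈ D.Δ, w.symm δ ∈ (I.image fun α => -α) ∪ D.Pos) :
    ∀ n α, α ∈ negSet D w → rootHt D (-(w α)) ≤ n → α ∈ sclose D (negSet D w ∩ I) := by
  intro n
  induction n with
  | zero =>
      intro α hα hht
      have hαη : -(w α) ∈ D.Pos := ((mem_negSet D).mp hα).2
      have := rootHt_pos D hαη
      omega
  | succ n ih =>
      intro α hα hht
      set Y := negSet D w ∩ I with hYdef
      have hYP : Y ⊆ D.Pos := fun y hy => ((mem_negSet D).mp (Finset.mem_inter.mp hy).1).1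
      have hαP : α ∈ D.Pos := ((mem_negSet D).mp hα).1
      have hη : -(w α) ∈ D.Pos := ((mem_negSet D).mp hα).2
      by_cases hηΔ : -(w α) ∈ D.Δ
      · exact subset_sclose D hYP (Finset.mem_inter.mpr ⟨hα, scond_M D hS hαP hηΔ⟩)
      · rcases exists_simple_sub D hη hηΔ with ⟨ε, hε, -, hη'⟩
        set η' : V := -(w α) - ε with hη'def
        have hεP := D.simple_subset hε
        -- α = p + q with p = -w⁻¹η', q = -w⁻¹ε
        set p : V := -(w.symm η') with hpdef
        set q : V := -(w.symm ε) with hqdef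
        have hαpq : α = p + q := by
          have h1 : w.symm (-(w α) - ε) = -α - w.symm ε := by
            rw [map_sub, map_neg, LinearEquiv.symm_apply_apply]
          rw [hpdef, hqdef, hη'def, h1]
          abel
        have hpφ : p ∈ D.Φ := by
          rw [hpdef]
          exact neg_mem_phi D (weyl_phi_symm D hw (D.pos_subset hη'))
        have hqφ : q ∈ D.Φ := by
          rw [hqdef]
          exact neg_mem_phi D (weyl_phi_symm D hw (simple_phi D hε))
        have hwp : w p = -η' := by
          rw [hpdef, map_neg, LinearEquiv.apply_symm_apply]
        have hwq : w q = -ε := by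
          rw [hqdef, map_neg, LinearEquiv.apply_symm_apply]
        -- height bookkeeping
        have hadd : rootHt D (-(w α)) = rootHt D η' + 1 := by
          have h1 : η' + ε = -(w α) := by rw [hη'def]; abel
          have := rootHt_add D hη' hεP (by rw [h1]; exact hη)
          rw [h1] at this
          rw [this, rootHt_simple D hε]
        rcases D.pos_or_neg p hpφ with hpP | hpN
        · rcases D.pos_or_neg q hqφ with hqP | hqN
          · -- both positive
            have hpNg : p ∈ negSet D w := mem_negSet_of D hpP (by rw [hwp, neg_neg]; exact hη')
            have hqNg : q ∈ negSet D w := mem_negSet_of D hqP (by rw [hwq, neg_neg]; exact hεP)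
            have hp' : p ∈ sclose D Y := by
              apply ih p hpNg
              rw [hwp, neg_neg]
              omega
            have hq' : q ∈ sclose D Y := by
              apply ih q hqNg
              rw [hwq, neg_neg, rootHt_simple D hε]
              have h2 : 1 ≤ rootHt D η' := rootHt_pos D hη'
              omega
            rw [hαpq]
            exact sclose_add D hp' hq' (by rw [← hαpq]; exact D.pos_subset hαP)
          · -- p positive, q negative : use Lemma E with c = -q
            have hpNg : p ∈ negSet D w := mem_negSet_of D hpP (by rw [hwp, neg_neg]; exact hη')
            have hp' : p ∈ sclose D Y := by
              apply ih p hpNg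
              rw [hwp, neg_neg]
              omega
            rcases (mem_sclose D).mp hp' with ⟨-, mm, hmne, hmm, hmsum⟩
            have hcN : -q ∉ negSet D w := by
              intro hmem
              have := ((mem_negSet D).mp hmem).2
              rw [map_neg, hwq, neg_neg] at this
              exact D.pos_not_neg ε hεP this
            apply lemE D hI hw (Multiset.card mm) mm le_rfl hmne hmm α (-q) hα hqN hcN
            rw [hmsum, hαpq]
            abel
        · -- p negative
          rcases D.pos_or_neg q hqφ with hqP | hqN
          · -- q positive : q ∈ I and α ∈ I
            have hqNg : q ∈ negSet D w := mem_negSet_of D hqP (by rw [hwq, neg_neg]; exact hεP)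
            have hqI : q ∈ I := scond_M D hS hqP (by rw [hwq, neg_neg]; exact hε)
            have hαI : α ∈ I := by
              have h3 := hI.2 q hqI (-p) hpN ?_
              · have h4 : q - -p = α := by rw [hαpq]; abel
                rwa [h4] at h3
              · have h4 : q - -p = α := by rw [hαpq]; abel
                rw [h4]; exact hαP
            exact subset_sclose D hYP (Finset.mem_inter.mpr ⟨hα, hαI⟩)
          · -- both negative : impossible
            exfalso
            have h5 : -α = (-p) + (-q) := by rw [hαpq]; abel
            have h6 : -α ∈ D.Φ := neg_mem_phi D (D.pos_subset hαP)
            rw [h5] at h6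
            have h7 : (-p) + (-q) ∈ D.Pos := add_pos_mem D hpN hqN h6
            rw [← h5] at h7
            exact D.pos_not_neg α hαP h7

/-- `N(w)` is exactly the closure of its trace on `I`. -/
lemma negSet_eq_sclose {I : Finset V} (hI : IsLowerIdealOf D.Pos I) {w : V ≃ₗ[ℚ] V}
    (hw : w ∈ WeylGroup D)
    (hS : ∀ δ ∈ D.Δ, w.symm δ ∈ (I.image fun α => -α) ∪ D.Pos) :
    negSet D w = sclose D (negSet D w ∩ I) := by
  apply Finset.Subset.antisymm
  · intro α hα
    exact negSet_subset_sclose D hI hw hS (rootHt D (-(w α))) α hα le_rfl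
  · intro σ hσ
    rcases (mem_sclose D).mp hσ with ⟨hσP, m, hmne, hm, hmsum⟩
    rw [← hmsum]
    apply negSet_msum D hw (fun γ hγ => (Finset.mem_inter.mp (hm γ hγ)).1) hmne
    rw [hmsum]
    exact hσP

/-- s3: the closure meets `I` exactly in `Y`. -/
lemma sclose_inter_eq {I : Finset V} (hI : IsLowerIdealOf D.Pos I) {Y : Finset V}
    (hYW : IsWeylType I Y) :
    ∀ n x, x ∈ sclose D Y → x ∈ I → rootHt D x ≤ n → x ∈ Y := by
  have hYP : Y ⊆ D.Pos := fun y hy => hI.1 (hYW.1 hy)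
  intro n
  induction n with
  | zero =>
      intro x hx hxI hht
      have := rootHt_pos D (sclose_subset_pos D hx)
      omega
  | succ n ih =>
      intro x hx hxI hht
      rcases (mem_sclose D).mp hx with ⟨hxP, m, hmne, hm, hmsum⟩
      rcases eq_or_lt_of_le (Nat.one_le_iff_ne_zero.mpr
        (fun h => hmne (Multiset.card_eq_zero.mp h))) with h1 | h2
      · rcases Multiset.card_eq_one.mp h1.symm with ⟨y, rfl⟩
        simp only [Multiset.sum_singleton] at hmsum
        rw [← hmsum]
        exact hm y (by simp)
      · rcases msum_peel D (fun γ hγ => hYP (hm γ hγ)) h2 hxP hmsum with ⟨y, hym, hsubP, hsubsum⟩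
        have hyY : y ∈ Y := hm y hym
        have hyP : y ∈ D.Pos := hYP hyY
        have hsubI : x - y ∈ I := hI.2 x hxI y hyP hsubP
        have hsubC : x - y ∈ sclose D Y := by
          rw [mem_sclose]
          refine ⟨hsubP, m.erase y, ?_, fun z hz => hm z (Multiset.mem_of_mem_erase hz),
            hsubsum⟩
          intro h0
          have hpred : Multiset.card (m.erase y) = Multiset.card m - 1 :=
            Multiset.card_erase_of_mem hym
          rw [h0, Multiset.card_zero] at hpred
          omega
        have hht' : rootHt D (x - y) ≤ n := by
          have hsum2 : (x - y) + y = x := by abel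
          have := rootHt_add D hsubP hyP (by rw [hsum2]; exact hxP)
          rw [hsum2] at this
          have hy1 := rootHt_pos D hyP
          omega
        have hsubY : x - y ∈ Y := ih (x - y) hsubC hsubI hht'
        have := hYW.2.1 (x - y) hsubY y hyY (by rw [sub_add_cancel]; exact hxI)
        rwa [sub_add_cancel] at this

end RSAux
namespace RSAux

variable {V : Type} [AddCommGroup V] [Module ℚ V] (D : RootSystemData V)

/-- H2: the sum-closure of a Weyl type subset is co-closed. -/
lemma sclose_coclosed {I : Finset V} (hI : IsLowerIdealOf D.Pos I) {Y : Finset V}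
    (hYW : IsWeylType I Y) :
    ∀ n (m : Multiset V), Multiset.card m ≤ n → m ≠ 0 → (∀ y ∈ m, y ∈ Y) →
    ∀ α β : V, α ∈ D.Pos → β ∈ D.Pos → m.sum ∈ D.Pos → α + β = m.sum →
    α ∈ sclose D Y ∨ β ∈ sclose D Y := by
  have hYP : Y ⊆ D.Pos := fun y hy => hI.1 (hYW.1 hy)
  intro n
  induction n with
  | zero =>
      intro m hcard hne
      exact absurd (Multiset.card_eq_zero.mp (Nat.le_zero.mp hcard)) hne
  | succ n ih =>
      intro m hcard hne hm α β hαP hβP hσP hab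
      rcases eq_or_lt_of_le (Nat.one_le_iff_ne_zero.mpr
        (fun h => hne (Multiset.card_eq_zero.mp h))) with h1 | h2
      · -- singleton
        rcases Multiset.card_eq_one.mp h1.symm with ⟨y, rfl⟩
        simp only [Multiset.sum_singleton] at hab hσP
        have hyY : y ∈ Y := hm y (by simp)
        have hyI : y ∈ I := hYW.1 hyY
        have hαI : α ∈ I := by
          have := hI.2 y hyI β hβP (by rw [← hab, add_sub_cancel_right]; exact hαP)
          rwa [← hab, add_sub_cancel_right] at this
        have hβI : β ∈ I := by
          have := hI.2 y hyI α hαP (by rw [← hab, add_sub_cancel_left]; exact hβP)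
          rwa [← hab, add_sub_cancel_left] at this
        by_cases hαY : α ∈ Y
        · exact Or.inl (subset_sclose D hYP hαY)
        by_cases hβY : β ∈ Y
        · exact Or.inr (subset_sclose D hYP hβY)
        have hyY2 : α + β ∈ Y := by rw [hab]; exact hyY
        have hyI2 : α + β ∈ I := by rw [hab]; exact hyI
        exact absurd hyY2 (hYW.2.2 α hαI β hβI hαY hβY hyI2)
      · -- at least two elements : peel y
        rcases msum_peel D (fun γ hγ => hYP (hm γ hγ)) h2 hσP rfl with ⟨y, hym, hσ'P, hσ'sum⟩
        have hyY : y ∈ Y := hm y hym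
        have hyI : y ∈ I := hYW.1 hyY
        have hyP : y ∈ D.Pos := hYP hyY
        set σ' : V := m.sum - y with hσ'def
        have hs2 : m.sum = σ' + y := by rw [hσ'def]; abel
        have hpred : Multiset.card (m.erase y) = Multiset.card m - 1 :=
          Multiset.card_erase_of_mem hym
        have hcard' : Multiset.card (m.erase y) ≤ n := by omega
        have hne' : m.erase y ≠ 0 := by
          intro h0
          rw [h0, Multiset.card_zero] at hpred
          omega
        have hm' : ∀ z ∈ m.erase y, z ∈ Y := fun z hz => hm z (Multiset.mem_of_mem_erase hz)
        have hσ'C : σ' ∈ sclose D Y := by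
          rw [mem_sclose]
          exact ⟨hσ'P, m.erase y, hne', hm', hσ'sum⟩
        have hσ'φ : σ' ∈ D.Φ := D.pos_subset hσ'P
        -- key move 2 : positive pairing with σ'
        have key2 : ∀ a b : V, a ∈ D.Pos → b ∈ D.Pos → a + b = m.sum →
            0 < bform D a σ' → a ∈ sclose D Y ∨ b ∈ sclose D Y := by
          intro a b haP hbP habm hbf
          by_cases haσ' : a = σ'
          · exact Or.inl (haσ' ▸ hσ'C)
          · have hz : a - σ' ∈ D.Φ := pair_lemma D (D.pos_subset haP) hσ'φ hbf haσ'
            rcases D.pos_or_neg _ hz with hzp | hzn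
            · -- a - σ' positive : (a - σ') + b = y
              have hzy : (a - σ') + b = y := by
                have h3 : a + b = σ' + y := by rw [habm, hs2]
                have h4 : b = σ' + y - a := by rw [← h3]; abel
                rw [h4]; abel
              have hzI : a - σ' ∈ I := by
                have := hI.2 y hyI b hbP (by rw [← hzy, add_sub_cancel_right]; exact hzp)
                rwa [← hzy, add_sub_cancel_right] at this
              have hbI : b ∈ I := by
                have := hI.2 y hyI (a - σ') hzp
                  (by rw [← hzy, add_sub_cancel_left]; exact hbP)
                rwa [← hzy, add_sub_cancel_left] at this
              by_cases hbY : b ∈ Y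
              · exact Or.inr (subset_sclose D hYP hbY)
              · have hzY : a - σ' ∈ Y := by
                  by_contra hzY
                  have hyY2 : (a - σ') + b ∈ Y := by rw [hzy]; exact hyY
                  have hyI2 : (a - σ') + b ∈ I := by rw [hzy]; exact hyI
                  exact absurd hyY2 (hYW.2.2 (a - σ') hzI b hbI hzY hbY hyI2)
                left
                have ha' : a = σ' + (a - σ') := by abel
                rw [ha']
                exact sclose_add_elt D hYP hσ'C hzY (by rw [← ha']; exact D.pos_subset haP)
            · -- a - σ' negative : a + (σ' - a) = σ', use IH
              rw [neg_sub] at hzn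
              have hsum' : a + (σ' - a) = (m.erase y).sum := by rw [hσ'sum]; abel
              rcases ih (m.erase y) hcard' hne' hm' a (σ' - a) haP hzn
                (by rw [hσ'sum]; exact hσ'P) hsum' with h | h
              · exact Or.inl h
              · right
                have hb'' : b = (σ' - a) + y := by
                  have h3 : a + b = σ' + y := by rw [habm, hs2]
                  have h4 : b = σ' + y - a := by rw [← h3]; abel
                  rw [h4]; abel
                rw [hb'']
                exact sclose_add_elt D hYP h hyY (by rw [← hb'']; exact D.pos_subset hbP)
        -- key move 1 : positive pairing with y
        have key1 : ∀ a b : V, a ∈ D.Pos → b ∈ D.Pos → a + b = m.sum →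
            0 < bform D a y → a ∈ sclose D Y ∨ b ∈ sclose D Y := by
          intro a b haP hbP habm hbf
          by_cases hay : a = y
          · exact Or.inl (subset_sclose D hYP (hay ▸ hyY))
          · have hz : a - y ∈ D.Φ :=
              pair_lemma D (D.pos_subset haP) (D.pos_subset hyP) hbf hay
            rcases D.pos_or_neg _ hz with hzp | hzn
            · -- a - y positive : (a - y) + b = σ', use IH
              have hsum' : (a - y) + b = (m.erase y).sum := by
                have h3 : a + b = σ' + y := by rw [habm, hs2]
                have h4 : b = σ' + y - a := by rw [← h3]; abel
                rw [hσ'sum, h4]; abel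
              rcases ih (m.erase y) hcard' hne' hm' (a - y) b hzp hbP
                (by rw [hσ'sum]; exact hσ'P) hsum' with h | h
              · left
                have ha' : a = (a - y) + y := by abel
                rw [ha']
                exact sclose_add_elt D hYP h hyY (by rw [← ha']; exact D.pos_subset haP)
              · exact Or.inr h
            · -- a - y negative : u := y - a
              rw [neg_sub] at hzn
              have haI : a ∈ I := by
                have := hI.2 y hyI (y - a) hzn (by rw [sub_sub_cancel]; exact haP)
                rwa [sub_sub_cancel] at this
              have huI : y - a ∈ I := hI.2 y hyI a haP hzn
              by_cases haY : a ∈ Y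
              · exact Or.inl (subset_sclose D hYP haY)
              · have huY : y - a ∈ Y := by
                  by_contra huY
                  have hsum2 : a + (y - a) = y := by abel
                  have hyY2 : a + (y - a) ∈ Y := by rw [hsum2]; exact hyY
                  have hyI2 : a + (y - a) ∈ I := by rw [hsum2]; exact hyI
                  exact absurd hyY2 (hYW.2.2 a haI (y - a) huI haY huY hyI2)
                right
                have hb'' : b = σ' + (y - a) := by
                  have h3 : a + b = σ' + y := by rw [habm, hs2]
                  have h4 : b = σ' + y - a := by rw [← h3]; abel
                  rw [h4]; abel
                rw [hb'']
                exact sclose_add_elt D hYP hσ'C huY (by rw [← hb'']; exact D.pos_subset hbP)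
        by_cases hc1 : 0 < bform D α σ'
        · exact key2 α β hαP hβP hab hc1
        by_cases hc2 : 0 < bform D β σ'
        · exact (key2 β α hβP hαP (by rw [← hab]; abel) hc2).symm
        by_cases hc3 : 0 < bform D α y
        · exact key1 α β hαP hβP hab hc3
        by_cases hc4 : 0 < bform D β y
        · exact (key1 β α hβP hαP (by rw [← hab]; abel) hc4).symm
        -- contradiction
        exfalso
        push_neg at hc1 hc2 hc3 hc4
        have hσ0 : m.sum ≠ 0 := D.root_ne_zero _ (D.pos_subset hσP)
        have hpos := bform_pos D hσ0
        have he : bform D m.sum m.sum ≤ 0 := by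
          conv_lhs => rw [← hab]
          rw [bform_add_left, hab, hs2, bform_add_right, bform_add_right]
          linarith
        linarith

end RSAux
namespace RSAux

variable {V : Type} [AddCommGroup V] [Module ℚ V] (D : RootSystemData V)

/-- Every biconvex set is `N(w)` for some `w ∈ W`. -/
lemma biconvex_exists_w : ∀ n (C : Finset V), C.card ≤ n → C ⊆ D.Pos →
    (∀ a ∈ C, ∀ b ∈ C, a + b ∈ D.Φ → a + b ∈ C) →
    (∀ a ∈ D.Pos, ∀ b ∈ D.Pos, a ∉ C → b ∉ C → a + b ∈ D.Pos → a + b ∉ C) →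
    ∃ w ∈ WeylGroup D, negSet D w = C := by
  intro n
  induction n with
  | zero =>
      intro C hcard _ _ _
      have hC : C = ∅ := Finset.card_eq_zero.mp (Nat.le_zero.mp hcard)
      exact ⟨1, (WeylGroup D).one_mem,
        by rw [hC]; exact (negSet_empty_iff D (WeylGroup D).one_mem).mpr rfl⟩
  | succ n ih =>
      intro C hcard hCP hclosed hcoclosed
      rcases Finset.eq_empty_or_nonempty C with rfl | hCne
      · exact ⟨1, (WeylGroup D).one_mem, (negSet_empty_iff D (WeylGroup D).one_mem).mpr rfl⟩
      · rcases Finset.exists_min_image C (rootHt D) hCne with ⟨δ, hδC, hmin⟩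
        have hδP : δ ∈ D.Pos := hCP hδC
        have hδΔ : δ ∈ D.Δ := by
          by_contra hnot
          rcases exists_simple_sub D hδP hnot with ⟨ε, hε, -, hsub⟩
          have hεP := D.simple_subset hε
          have hsum : (δ - ε) + ε = δ := by abel
          have hone : δ - ε ∈ C ∨ ε ∈ C := by
            by_contra hno
            push_neg at hno
            exact hcoclosed (δ - ε) hsub ε hεP hno.1 hno.2 (by rw [hsum]; exact hδP)
              (by rw [hsum]; exact hδC)
          have hhts : rootHt D δ = rootHt D (δ - ε) + 1 := by
            have := rootHt_add D hsub hεP (by rw [hsum]; exact hδP)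
            rw [hsum] at this
            rw [this, rootHt_simple D hε]
          rcases hone with h | h
          · have := hmin _ h
            have h1 := rootHt_pos D hsub
            omega
          · have := hmin _ h
            rw [rootHt_simple D hε] at this
            have h1 := rootHt_pos D hsub
            omega
        have hδφ := simple_phi D hδΔ
        set s := sref D δ hδφ with hs
        set C' : Finset V := (C.erase δ).image (fun x => s x) with hC'
        have hsinj : Function.Injective (fun x : V => s x) := s.injective
        have hC'card : C'.card ≤ n := by
          rw [hC', Finset.card_image_of_injective _ hsinj]
          have h1 : (C.erase δ).card = C.card - 1 := Finset.card_erase_of_mem hδC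
          have h2 : 1 ≤ C.card := Finset.card_pos.mpr hCne
          omega
        have hmemC' : ∀ x : V, x ∈ C' ↔ s x ∈ C.erase δ := by
          intro x
          rw [hC', Finset.mem_image]
          constructor
          · rintro ⟨c, hc, rfl⟩
            rw [show s (s c) = c from sref_sref D hδφ c]
            exact hc
          · intro h
            exact ⟨s x, h, sref_sref D hδφ x⟩
        have hC'P : C' ⊆ D.Pos := by
          intro x hx
          rw [hC', Finset.mem_image] at hx
          rcases hx with ⟨c, hc, rfl⟩
          have hcP : c ∈ D.Pos := hCP (Finset.mem_of_mem_erase hc)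
          have hcne : c ≠ δ := Finset.ne_of_mem_erase hc
          exact (sref_simple_pos D hδΔ hcP hcne).1
        have hsnotδ : ∀ x ∈ D.Pos, s x ≠ δ := by
          intro x hxP habs
          have := congrArg s habs
          rw [sref_sref] at this
          rw [this, sref_root D hδφ] at hxP
          exact D.pos_not_neg δ (D.simple_subset hδΔ) hxP
        have hδC' : δ ∉ C' := by
          intro h
          rw [hC', Finset.mem_image] at h
          rcases h with ⟨c, hc, hcs⟩
          exact hsnotδ c (hCP (Finset.mem_of_mem_erase hc)) hcs
        have hclosed' : ∀ a ∈ C', ∀ b ∈ C', a + b ∈ D.Φ → a + b ∈ C' := by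
          intro a ha b hb hab
          rw [hmemC'] at ha hb ⊢
          rw [map_add]
          have haC := Finset.mem_of_mem_erase ha
          have hbC := Finset.mem_of_mem_erase hb
          have hsab : s a + s b ∈ D.Φ := by
            rw [← map_add]
            exact sref_mem_phi D hδφ hab
          have hmem := hclosed _ haC _ hbC hsab
          apply Finset.mem_erase_of_ne_of_mem _ hmem
          intro habs
          -- then a + b = s δ = -δ, impossible since a + b ∈ Pos
          have habP : a + b ∈ D.Pos :=
            add_pos_mem D (hC'P (by rw [hmemC']; exact ha)) (hC'P (by rw [hmemC']; exact hb)) hab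
          rw [← map_add] at habs
          have := congrArg s habs
          rw [sref_sref, sref_root D hδφ] at this
          rw [this] at habP
          exact D.pos_not_neg δ (D.simple_subset hδΔ) habP
        have hcoclosed' : ∀ a ∈ D.Pos, ∀ b ∈ D.Pos, a ∉ C' → b ∉ C' →
            a + b ∈ D.Pos → a + b ∉ C' := by
          have hδcase : ∀ q ∈ D.Pos, q ∉ C' → δ + q ∈ D.Pos → δ + q ∉ C' := by
            intro q hqP hqC' hsumP habs
            rw [hmemC'] at habs
            have hc := Finset.mem_of_mem_erase habs
            have h1 : s (δ + q) = -δ + s q := by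
              rw [map_add, sref_root D hδφ]
            have h2 : s q = s (δ + q) + δ := by rw [h1]; abel
            have h3 : s (δ + q) + δ ∈ D.Φ := by
              rw [← h2]
              exact sref_mem_phi D hδφ (D.pos_subset hqP)
            have h4 : s q ∈ C := by
              rw [h2]
              exact hclosed _ hc _ hδC h3
            apply hqC'
            rw [hmemC']
            exact Finset.mem_erase_of_ne_of_mem (hsnotδ q hqP) h4
          intro a haP b hbP haC' hbC' hsumP habs
          by_cases haδ : a = δ
          · exact hδcase b hbP hbC' (haδ ▸ hsumP) (haδ ▸ habs)
          by_cases hbδ : b = δ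
          · rw [hbδ, add_comm] at hsumP habs
            exact hδcase a haP haC' hsumP habs
          · have hsaP : s a ∈ D.Pos := (sref_simple_pos D hδΔ haP haδ).1
            have hsbP : s b ∈ D.Pos := (sref_simple_pos D hδΔ hbP hbδ).1
            have hsaC : s a ∉ C := by
              intro h
              apply haC'
              rw [hmemC']
              exact Finset.mem_erase_of_ne_of_mem (hsnotδ a haP) h
            have hsbC : s b ∉ C := by
              intro h
              apply hbC'
              rw [hmemC']
              exact Finset.mem_erase_of_ne_of_mem (hsnotδ b hbP) h
            have habδ : a + b ≠ δ := by
              intro h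
              rw [hmemC'] at habs
              have := Finset.mem_of_mem_erase habs
              rw [h, sref_root D hδφ] at this
              have := hCP this
              exact D.pos_not_neg δ (D.simple_subset hδΔ) this
            have hsab : s (a + b) ∈ D.Pos := (sref_simple_pos D hδΔ hsumP habδ).1
            have hsum2 : s a + s b ∈ D.Pos := by rw [← map_add]; exact hsab
            have := hcoclosed (s a) hsaP (s b) hsbP hsaC hsbC hsum2
            apply this
            rw [← map_add]
            rw [hmemC'] at habs
            exact Finset.mem_of_mem_erase habs
        rcases ih C' hC'card hC'P hclosed' hcoclosed' with ⟨w', hw', hNw'⟩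
        refine ⟨w' * s, (WeylGroup D).mul_mem hw' (sref_mem_weyl D hδφ), ?_⟩
        apply Finset.ext
        intro α
        rw [mem_negSet D]
        by_cases hαP : α ∈ D.Pos
        · simp only [hαP, true_and]
          have happ : (w' * s) α = w' (s α) := rfl
          by_cases hαδ : α = δ
          · subst hαδ
            have h1 : (w' * s) α = -(w' α) := by
              rw [happ, hs, sref_root D hδφ, map_neg]
            rw [h1, neg_neg]
            have hδN : α ∉ negSet D w' := by
              rw [hNw']
              exact hδC'
            constructor
            · intro _; exact hδC
            · intro _
              exact w_pos_of_not_negSet D hw' hαP hδN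
          · have hsαP : s α ∈ D.Pos := (sref_simple_pos D hδΔ hαP hαδ).1
            constructor
            · intro h
              have hmem : s α ∈ negSet D w' := mem_negSet_of D hsαP (by rw [← happ]; exact h)
              rw [hNw', hmemC', sref_sref] at hmem
              exact Finset.mem_of_mem_erase hmem
            · intro h
              have hmem : s α ∈ C' := by
                rw [hmemC', sref_sref]
                exact Finset.mem_erase_of_ne_of_mem hαδ h
              rw [← hNw'] at hmem
              rw [happ]
              exact ((mem_negSet D).mp hmem).2
        · constructor
          · rintro ⟨h, -⟩; exact absurd h hαP
          · intro h; exact absurd (hCP h) hαP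

end RSAux
/-- Let `I` be a lower ideal in `Φ⁺`. Then `w ↦ N(w) ∩ I` is a bijection
from `{w ∈ W : w⁻¹(Δ) ⊆ (−I) ∪ Φ⁺}` onto the set `𝒲^I` of Weyl type subsets of `I`. -/
theorem bijOn_negSet_inter_weylType
    {V : Type} [AddCommGroup V] [Module ℚ V] (D : RootSystemData V)
    (I : Finset V) (hI : IsLowerIdealOf D.Pos I) :
    Set.BijOn (fun w : V ≃ₗ[ℚ] V => negSet D w ∩ I)
      {w : V ≃ₗ[ℚ] V | w ∈ WeylGroup D ∧
        ∀ δ ∈ D.Δ, w.symm δ ∈ (I.image fun α => -α) ∪ D.Pos}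
      {Y : Finset V | IsWeylType I Y} := by
  open RSAux in
  refine ⟨?_, ?_, ?_⟩
  · -- MapsTo
    rintro w ⟨hw, -⟩
    exact trace_weyltype D hI hw
  · -- InjOn
    rintro w₁ ⟨hw₁, hS₁⟩ w₂ ⟨hw₂, hS₂⟩ h
    simp only at h
    apply negSet_inj D hw₁ hw₂
    rw [negSet_eq_sclose D hI hw₁ hS₁, negSet_eq_sclose D hI hw₂ hS₂, h]
  · -- SurjOn
    intro Y hY
    simp only [Set.mem_setOf_eq] at hY
    have hYP : Y ⊆ D.Pos := fun y hy => hI.1 (hY.1 hy)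
    set C : Finset V := sclose D Y with hC
    have hCP : C ⊆ D.Pos := sclose_subset_pos D
    have hclosed : ∀ a ∈ C, ∀ b ∈ C, a + b ∈ D.Φ → a + b ∈ C :=
      fun a ha b hb hab => sclose_add D ha hb hab
    have hcoclosed : ∀ a ∈ D.Pos, ∀ b ∈ D.Pos, a ∉ C → b ∉ C → a + b ∈ D.Pos → a + b ∉ C := by
      intro a haP b hbP haC hbC habP habs
      rcases (mem_sclose D).mp habs with ⟨-, m, hmne, hm, hmsum⟩
      rcases sclose_coclosed D hI hY (Multiset.card m) m le_rfl hmne hm a b haP hbP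
        (by rw [hmsum]; exact habP) hmsum.symm with h | h
      · exact haC h
      · exact hbC h
    rcases biconvex_exists_w D C.card C le_rfl hCP hclosed hcoclosed with ⟨w, hw, hNw⟩
    -- the boundary condition
    have hM : ∀ γ ∈ D.Pos, -(w γ) ∈ D.Δ → γ ∈ I := by
      intro γ hγP hγΔ
      have hγN : γ ∈ negSet D w := mem_negSet_of D hγP (D.simple_subset hγΔ)
      rw [hNw] at hγN
      rcases (mem_sclose D).mp hγN with ⟨-, m, hmne, hm, hmsum⟩
      rcases eq_or_lt_of_le (Nat.one_le_iff_ne_zero.mpr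
        (fun h => hmne (Multiset.card_eq_zero.mp h))) with h1 | h2
      · rcases Multiset.card_eq_one.mp h1.symm with ⟨y, rfl⟩
        simp only [Multiset.sum_singleton] at hmsum
        exact hY.1 (hmsum ▸ hm y (by simp))
      · exfalso
        rcases msum_peel D (fun x hx => hYP (hm x hx)) h2 hγP hmsum with ⟨y, hym, hsubP, hsubsum⟩
        have hyN : y ∈ negSet D w := by
          rw [hNw]
          exact subset_sclose D hYP (hm y hym)
        have hsubN : γ - y ∈ negSet D w := by
          rw [hNw, mem_sclose]
          refine ⟨hsubP, m.erase y, ?_, fun z hz => hm z (Multiset.mem_of_mem_erase hz), hsubsum⟩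
          intro h0
          have hpred : Multiset.card (m.erase y) = Multiset.card m - 1 :=
            Multiset.card_erase_of_mem hym
          rw [h0, Multiset.card_zero] at hpred
          omega
        -- -(w γ) is a sum of two positive roots, contradicting height 1
        have hd : -(w γ) = -(w (γ - y)) + -(w y) := by
          rw [map_sub]; abel
        have h3 : rootHt D (-(w γ)) = rootHt D (-(w (γ - y))) + rootHt D (-(w y)) := by
          have := rootHt_add D ((mem_negSet D).mp hsubN).2 ((mem_negSet D).mp hyN).2
            (by rw [← hd]; exact D.simple_subset hγΔ)
          rw [← hd] at this
          exact this
        rw [rootHt_simple D hγΔ] at h3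
        have h4 := rootHt_pos D ((mem_negSet D).mp hsubN).2
        have h5 := rootHt_pos D ((mem_negSet D).mp hyN).2
        omega
    refine ⟨w, ⟨hw, scond_of_M D hw hM⟩, ?_⟩
    -- the trace is Y
    simp only
    apply Finset.Subset.antisymm
    · intro x hx
      rcases Finset.mem_inter.mp hx with ⟨hxN, hxI⟩
      rw [hNw] at hxN
      exact sclose_inter_eq D hI hY (rootHt D x) x hxN hxI le_rfl
    · intro y hy
      apply Finset.mem_inter.mpr
      refine ⟨?_, hY.1 hy⟩
      rw [hNw]
      exact subset_sclose D hYP hy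

end
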